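/- arXiv:1509.07574 — 8 statements merged into one kernel-verified Lean document; each statement's English description precedes it below -/
import Mathlib

section
/- Let R be a countable integral domain. Then R is a field if and only if there exists a finitely additive affinely invariant mean on R, that is, a function λ from the power set of R to the interval [0,1] such that λ(R) = 1, λ(E_1 ∪ E_2) = λ(E_1) + λ(E_2) whenever E_1, E_2 ⊆ R are disjoint, and λ({x ∈ R : u·x + v ∈ E}) = λ(E) for every E ⊆ R and all u, v ∈ R with u ≠ 0. -/
open Finset Filter Topology
set_option maxHeartbeats 1000000

theorem exists_mean (G : Type*) [CommGroup G] [Countable G] [Nonempty G] :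
    ∃ n : (G → ℝ) → ℝ,
      (n (fun _ => 1) = 1) ∧
      (∀ f : G → ℝ, (∀ x, 0 ≤ f x ∧ f x ≤ 1) → 0 ≤ n f ∧ n f ≤ 1) ∧
      (∀ f g : G → ℝ, (∀ x, |f x| ≤ 1) → (∀ x, |g x| ≤ 1) →
        n (fun x => f x + g x) = n f + n g) ∧
      (∀ (f : G → ℝ) (a : G), (∀ x, |f x| ≤ 1) → n (fun x => f (a * x)) = n f) := by
  classical
  obtain ⟨e, he⟩ := exists_surjective_nat G
  obtain ⟨U, hU⟩ := Ultrafilter.exists_le (atTop : Filter ℕ)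
  set w : ∀ k : ℕ, (Fin k → Fin k) → G := fun k a => ∏ i : Fin k, e (i : ℕ) ^ ((a i : ℕ)) with hw
  set avg : ℕ → (G → ℝ) → ℝ :=
    fun k f => (∑ a : Fin k → Fin k, f (w k a)) / (k : ℝ) ^ k with havg
  have hpow_pos : ∀ k : ℕ, (0:ℝ) < (k : ℝ) ^ k := by
    intro k
    rcases Nat.eq_zero_or_pos k with h | h
    · subst h; norm_num
    · positivity
  have hcard : ∀ k : ℕ, (Fintype.card (Fin k → Fin k) : ℝ) = (k : ℝ) ^ k := by
    intro k; simp
  -- bounds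
  have habs : ∀ (k : ℕ) (f : G → ℝ), (∀ x, |f x| ≤ 1) → |avg k f| ≤ 1 := by
    intro k f hf
    rw [havg, abs_div, abs_of_pos (hpow_pos k), div_le_one (hpow_pos k)]
    calc |∑ a : Fin k → Fin k, f (w k a)| ≤ ∑ a : Fin k → Fin k, |f (w k a)| :=
          Finset.abs_sum_le_sum_abs _ _
      _ ≤ ∑ _a : Fin k → Fin k, (1:ℝ) := Finset.sum_le_sum fun a _ => hf _
      _ = (k : ℝ) ^ k := by rw [Finset.sum_const, card_univ, nsmul_eq_mul, mul_one, hcard]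
  have hone : ∀ k : ℕ, avg k (fun _ => 1) = 1 := by
    intro k
    rw [havg]
    simp only [Finset.sum_const, card_univ, nsmul_eq_mul, mul_one]
    rw [hcard, div_self (hpow_pos k).ne']
  have hnn : ∀ (k : ℕ) (f : G → ℝ), (∀ x, 0 ≤ f x) → 0 ≤ avg k f := by
    intro k f hf
    exact div_nonneg (Finset.sum_nonneg fun a _ => hf _) (hpow_pos k).le
  have hle1 : ∀ (k : ℕ) (f : G → ℝ), (∀ x, f x ≤ 1) → avg k f ≤ 1 := by
    intro k f hf
    rw [havg, div_le_one (hpow_pos k)]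
    calc ∑ a : Fin k → Fin k, f (w k a) ≤ ∑ _a : Fin k → Fin k, (1:ℝ) :=
          Finset.sum_le_sum fun a _ => hf _
      _ = (k : ℝ) ^ k := by rw [Finset.sum_const, card_univ, nsmul_eq_mul, mul_one, hcard]
  have hadd : ∀ (k : ℕ) (f g : G → ℝ),
      avg k (fun x => f x + g x) = avg k f + avg k g := by
    intro k f g
    rw [havg]
    simp only [Finset.sum_add_distrib, add_div]
  -- existence of ultrafilter limits
  have hlim : ∀ f : G → ℝ, (∀ x, |f x| ≤ 1) →
      ∃ L : ℝ, Tendsto (fun k => avg k f) (U : Filter ℕ) (𝓝 L) := by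
    intro f hf
    have hmem : (↑(U.map fun k => avg k f) : Filter ℝ) ≤ 𝓟 (Set.Icc (-1 : ℝ) 1) := by
      rw [Ultrafilter.coe_map, Filter.le_principal_iff, Filter.mem_map]
      have : ∀ k, avg k f ∈ Set.Icc (-1:ℝ) 1 := fun k => abs_le.mp (habs k f hf)
      have : ((fun k => avg k f) ⁻¹' Set.Icc (-1:ℝ) 1) = Set.univ :=
        Set.eq_univ_of_forall this
      rw [this]; exact Filter.univ_mem
    obtain ⟨L, _, hL⟩ := (isCompact_Icc (a := (-1:ℝ)) (b := 1)).ultrafilter_le_nhds _ hmem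
    exact ⟨L, hL⟩
  -- the key Følner estimate
  have key : ∀ (f : G → ℝ), (∀ x, |f x| ≤ 1) → ∀ j k : ℕ, j < k →
      |avg k (fun x => f (e j * x)) - avg k f| ≤ 2 / k := by
    intro f hf j k hjk
    haveI : NeZero k := ⟨by omega⟩
    set j' : Fin k := ⟨j, hjk⟩ with hj'
    set σ : Equiv.Perm (Fin k → Fin k) :=
      { toFun := fun a => Function.update a j' (a j' + 1)
        invFun := fun a => Function.update a j' (a j' - 1)
        left_inv := by
          intro a
          simp [Function.update_idem]
        right_inv := by
          intro a
          simp [Function.update_idem] } with hσ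
    have hσapp : ∀ a, σ a = Function.update a j' (a j' + 1) := fun a => rfl
    have hgood : ∀ a : Fin k → Fin k, (a j' : ℕ) + 1 < k → w k (σ a) = e j * w k a := by
      intro a ha
      have hv : ((a j' + 1 : Fin k) : ℕ) = (a j' : ℕ) + 1 := by
        have hk2 : 1 < k := by omega
        rw [Fin.val_add, Fin.val_one', Nat.mod_eq_of_lt hk2, Nat.mod_eq_of_lt ha]
      have hjj : (j' : ℕ) = j := rfl
      calc w k (σ a)
          = ∏ i : Fin k, Function.update (fun i : Fin k => e (i : ℕ) ^ ((a i : ℕ))) j'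
              (e (j' : ℕ) ^ ((a j' + 1 : Fin k) : ℕ)) i := by
            rw [hσapp, hw]
            exact Finset.prod_congr rfl fun i _ =>
              Function.apply_update (fun (i : Fin k) (x : Fin k) => e (i : ℕ) ^ (x : ℕ)) a j' _ i
        _ = (e (j' : ℕ) ^ ((a j' + 1 : Fin k) : ℕ)) *
              ∏ i ∈ Finset.univ \ {j'}, e (i : ℕ) ^ ((a i : ℕ)) :=
            Finset.prod_update_of_mem (Finset.mem_univ j') _ _
        _ = e j * ((e (j' : ℕ) ^ ((a j' : ℕ))) *
              ∏ i ∈ Finset.univ \ {j'}, e (i : ℕ) ^ ((a i : ℕ))) := by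
            rw [hv, pow_succ, hjj, mul_comm (e j ^ (a j' : ℕ)) (e j), mul_assoc]
        _ = e j * w k a := by
            rw [hw]
            congr 1
            exact (Finset.prod_eq_mul_prod_sdiff_singleton_of_mem (Finset.mem_univ j')
              (fun i : Fin k => e (i : ℕ) ^ ((a i : ℕ)))).symm
    have hsum : ∑ a : Fin k → Fin k, f (w k (σ a)) = ∑ a : Fin k → Fin k, f (w k a) :=
      Equiv.sum_comp (σ : (Fin k → Fin k) ≃ (Fin k → Fin k)) (fun a => f (w k a))
    have hdiff : avg k (fun x => f (e j * x)) - avg k f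
        = (∑ a : Fin k → Fin k, (f (e j * w k a) - f (w k (σ a)))) / (k:ℝ)^k := by
      rw [havg, Finset.sum_sub_distrib, hsum, sub_div]
    rw [hdiff, abs_div, abs_of_pos (hpow_pos k)]
    have hcount : ∑ a : Fin k → Fin k,
        (if ((a j' : ℕ) + 1 < k) then (0:ℝ) else 2) = 2 * (k:ℝ)^(k-1) := by
      have h1 : ∀ a : Fin k → Fin k, (if ((a j' : ℕ) + 1 < k) then (0:ℝ) else 2)
          = ∏ i, (if i = j' then (if ((a i : ℕ) + 1 < k) then (0:ℝ) else 2) else 1) := by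
        intro a
        rw [Finset.prod_eq_single j']
        · simp
        · intro b _ hb; rw [if_neg hb]
        · intro h; exact absurd (Finset.mem_univ j') h
      calc ∑ a : Fin k → Fin k, (if ((a j' : ℕ) + 1 < k) then (0:ℝ) else 2)
          = ∑ a ∈ Fintype.piFinset (fun _ : Fin k => (Finset.univ : Finset (Fin k))),
              ∏ i, (if i = j' then (if ((a i : ℕ) + 1 < k) then (0:ℝ) else 2) else 1) := by
            rw [Fintype.piFinset_univ]
            exact Finset.sum_congr rfl fun a _ => h1 a
        _ = ∏ i : Fin k, ∑ x : Fin k,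
              (if i = j' then (if ((x : ℕ) + 1 < k) then (0:ℝ) else 2) else 1) :=
            (Finset.prod_univ_sum (fun _ : Fin k => (Finset.univ : Finset (Fin k)))
              (fun i x => if i = j' then (if ((x : ℕ) + 1 < k) then (0:ℝ) else 2) else 1)).symm
        _ = ∏ i : Fin k, (if i = j' then (2:ℝ) else k) := by
            refine Finset.prod_congr rfl fun i _ => ?_
            split_ifs with h
            · have h2 : ∀ x : Fin k, (if ((x : ℕ) + 1 < k) then (0:ℝ) else 2)
                  = (if x = (⟨k-1, by omega⟩ : Fin k) then (2:ℝ) else 0) := by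
                intro x
                have hlt := x.isLt
                by_cases hx : (x : ℕ) + 1 < k
                · rw [if_pos hx, if_neg (by simp only [Fin.ext_iff]; omega)]
                · rw [if_neg hx, if_pos (by simp only [Fin.ext_iff]; omega)]
              rw [Finset.sum_congr rfl fun x _ => h2 x, Finset.sum_ite_eq',
                if_pos (Finset.mem_univ _)]
            · simp
        _ = 2 * (k:ℝ)^(k-1) := by
            rw [← Finset.mul_prod_erase Finset.univ _ (Finset.mem_univ j'), if_pos rfl]
            congr 1
            rw [Finset.prod_congr rfl (fun i hi => if_neg (Finset.ne_of_mem_erase hi)),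
              Finset.prod_const, Finset.card_erase_of_mem (Finset.mem_univ j'),
              Finset.card_univ, Fintype.card_fin]
    have hterm : |∑ a : Fin k → Fin k, (f (e j * w k a) - f (w k (σ a)))|
        ≤ 2 * (k:ℝ)^(k-1) := by
      rw [← hcount]
      calc |∑ a : Fin k → Fin k, (f (e j * w k a) - f (w k (σ a)))|
          ≤ ∑ a : Fin k → Fin k, |f (e j * w k a) - f (w k (σ a))| :=
            Finset.abs_sum_le_sum_abs _ _
        _ ≤ ∑ a : Fin k → Fin k, (if ((a j' : ℕ) + 1 < k) then (0:ℝ) else 2) := by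
            refine Finset.sum_le_sum fun a _ => ?_
            split_ifs with h
            · rw [hgood a h, sub_self, abs_zero]
            · calc |f (e j * w k a) - f (w k (σ a))|
                  ≤ |f (e j * w k a)| + |f (w k (σ a))| := abs_sub _ _
                _ ≤ 1 + 1 := add_le_add (hf _) (hf _)
                _ = 2 := by norm_num
    calc |∑ a : Fin k → Fin k, (f (e j * w k a) - f (w k (σ a)))| / (k:ℝ)^k
        ≤ (2 * (k:ℝ)^(k-1)) / (k:ℝ)^k := by
          gcongr
      _ = 2 / k := by
          have hkk : (k:ℝ)^k = (k:ℝ)^(k-1) * k := by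
            rw [← pow_succ]
            congr 1
            omega
          rw [hkk]
          have hk0 : (k:ℝ) ≠ 0 := Nat.cast_ne_zero.mpr (by omega)
          rw [mul_comm ((k:ℝ)^(k-1)) (k:ℝ), mul_div_mul_right _ _ (pow_ne_zero _ hk0)]
  refine ⟨fun f => limUnder (U : Filter ℕ) (fun k => avg k f), ?_, ?_, ?_, ?_⟩
  · have h1 : (fun k => avg k (fun _ : G => (1:ℝ))) = fun _ => (1:ℝ) := funext hone
    have h2 : Tendsto (fun k => avg k (fun _ : G => (1:ℝ))) (U : Filter ℕ) (𝓝 1) := by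
      rw [h1]; exact tendsto_const_nhds
    exact h2.limUnder_eq
  · intro f hf
    beta_reduce
    have hb : ∀ x, |f x| ≤ 1 := fun x => abs_le.mpr ⟨by linarith [(hf x).1], (hf x).2⟩
    obtain ⟨L, hL⟩ := hlim f hb
    rw [Filter.Tendsto.limUnder_eq hL]
    constructor
    · exact ge_of_tendsto hL (Filter.Eventually.of_forall fun k => hnn k f fun x => (hf x).1)
    · exact le_of_tendsto hL (Filter.Eventually.of_forall fun k => hle1 k f fun x => (hf x).2)
  · intro f g hf hg
    beta_reduce
    obtain ⟨L, hL⟩ := hlim f hf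
    obtain ⟨M, hM⟩ := hlim g hg
    rw [Filter.Tendsto.limUnder_eq hL, Filter.Tendsto.limUnder_eq hM]
    refine Filter.Tendsto.limUnder_eq ?_
    have : (fun k => avg k (fun x => f x + g x)) = fun k => avg k f + avg k g :=
      funext fun k => hadd k f g
    rw [this]
    exact hL.add hM
  · intro f a hf
    beta_reduce
    obtain ⟨L, hL⟩ := hlim f hf
    obtain ⟨j, hj⟩ := he a
    rw [Filter.Tendsto.limUnder_eq hL]
    refine Filter.Tendsto.limUnder_eq ?_
    have hzero : Tendsto (fun k => avg k (fun x => f (a * x)) - avg k f) atTop (𝓝 0) := by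
      refine squeeze_zero_norm' ?_ (tendsto_const_div_atTop_nhds_zero_nat 2)
      filter_upwards [Filter.eventually_gt_atTop j] with k hk
      rw [Real.norm_eq_abs]
      subst hj
      exact key f hf j k hk
    have hzero' : Tendsto (fun k => avg k (fun x => f (a * x)) - avg k f) (U : Filter ℕ) (𝓝 0) :=
      hzero.mono_left hU
    have := hzero'.add hL
    simp only [sub_add_cancel, zero_add] at this
    exact this



/-- A countable integral domain `R` is a field iff there is a finitely
additive affinely invariant mean on `R`: a function `λ : 𝒫(R) → [0,1]` with `λ(R) = 1`,
additive on disjoint sets, and invariant under preimages by all affine maps `x ↦ u·x + v`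
with `u ≠ 0`. -/
theorem stmt8 (R : Type*) [CommRing R] [IsDomain R] [Countable R] :
    IsField R ↔
      ∃ lam : Set R → ℝ,
        (∀ E : Set R, 0 ≤ lam E ∧ lam E ≤ 1) ∧
        lam Set.univ = 1 ∧
        (∀ E₁ E₂ : Set R, Disjoint E₁ E₂ → lam (E₁ ∪ E₂) = lam E₁ + lam E₂) ∧
        (∀ (E : Set R) (u v : R), u ≠ 0 → lam {x : R | u * x + v ∈ E} = lam E) := by
  classical
  constructor
  · intro hF
    letI : Field R := hF.toField
    haveI : Countable Rˣ := Function.Injective.countable (fun a b h => Units.ext h : Function.Injective (Units.val : Rˣ → R))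
    haveI : Countable (Multiplicative R) := Countable.of_equiv R Multiplicative.ofAdd
    obtain ⟨m, hm1, hmb, hmadd, hminv⟩ := exists_mean (Multiplicative R)
    obtain ⟨n, hn1, hnb, hnadd, hninv⟩ := exists_mean Rˣ
    set ind : Set R → R → ℝ := fun E r => if r ∈ E then 1 else 0 with hind
    have hind01 : ∀ (E : Set R) (r : R), 0 ≤ ind E r ∧ ind E r ≤ 1 := by
      intro E r; rw [hind]; dsimp only; split_ifs <;> norm_num
    set F : Set R → Rˣ → ℝ := fun E u => m (fun x => ind E ((u : R) * x.toAdd)) with hFdef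
    have hF01 : ∀ (E : Set R) (u : Rˣ), 0 ≤ F E u ∧ F E u ≤ 1 := fun E u =>
      hmb _ (fun x => hind01 E _)
    have hFabs : ∀ (E : Set R) (u : Rˣ), |F E u| ≤ 1 := fun E u =>
      abs_le.mpr ⟨by linarith [(hF01 E u).1], (hF01 E u).2⟩
    refine ⟨fun E => n (F E), ?_, ?_, ?_, ?_⟩
    · intro E
      exact hnb (F E) (fun u => hF01 E u)
    · have h1 : F Set.univ = fun _ => 1 := by
        funext u
        have h2 : (fun x : Multiplicative R => ind Set.univ ((u:R) * x.toAdd))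
            = fun _ => 1 := by
          funext x; simp [hind]
        rw [hFdef]; dsimp only; rw [h2]; exact hm1
      dsimp only; rw [h1]; exact hn1
    · intro E₁ E₂ hdis
      have hptw : ∀ r : R, ind (E₁ ∪ E₂) r = ind E₁ r + ind E₂ r := by
        intro r
        rw [hind]; dsimp only
        by_cases h1 : r ∈ E₁
        · rw [if_pos h1, if_neg (Set.disjoint_left.mp hdis h1), if_pos (Set.mem_union_left _ h1)]
          norm_num
        · by_cases h2 : r ∈ E₂
          · rw [if_neg h1, if_pos h2, if_pos (Set.mem_union_right _ h2)]
            norm_num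
          · rw [if_neg h1, if_neg h2, if_neg (by simp [h1, h2])]
            norm_num
      have hFadd : F (E₁ ∪ E₂) = fun u => F E₁ u + F E₂ u := by
        funext u
        rw [hFdef]; dsimp only
        have : (fun x : Multiplicative R => ind (E₁ ∪ E₂) ((u:R) * x.toAdd))
            = fun x => ind E₁ ((u:R) * x.toAdd) + ind E₂ ((u:R) * x.toAdd) := by
          funext x; exact hptw _
        rw [this]
        exact hmadd _ _ (fun x => abs_le.mpr ⟨by linarith [(hind01 E₁ ((u:R)*x.toAdd)).1],
            (hind01 E₁ ((u:R)*x.toAdd)).2⟩)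
          (fun x => abs_le.mpr ⟨by linarith [(hind01 E₂ ((u:R)*x.toAdd)).1],
            (hind01 E₂ ((u:R)*x.toAdd)).2⟩)
      dsimp only; rw [hFadd]
      exact hnadd _ _ (hFabs E₁) (hFabs E₂)
    · intro E u₀ v hu
      set U₀ : Rˣ := Units.mk0 u₀ hu with hU₀
      have hval : ∀ u : Rˣ, ((U₀ * u : Rˣ) : R) = u₀ * u := by
        intro u; rw [Units.val_mul, hU₀, Units.val_mk0]
      have hval2 : ∀ u : Rˣ, ((U₀ * u : Rˣ) : R) * (((U₀ * u)⁻¹ : Rˣ) : R) = 1 := by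
        intro u; rw [← Units.val_mul, mul_inv_cancel, Units.val_one]
      have harg : ∀ (u : Rˣ) (t : R),
          ((U₀ * u : Rˣ) : R) * ((((U₀ * u)⁻¹ : Rˣ) : R) * v + t) = u₀ * ((u:R) * t) + v := by
        intro u t
        calc ((U₀ * u : Rˣ) : R) * ((((U₀ * u)⁻¹ : Rˣ) : R) * v + t)
            = ((U₀ * u : Rˣ) : R) * (((U₀ * u)⁻¹ : Rˣ) : R) * v
              + ((U₀ * u : Rˣ) : R) * t := by ring
          _ = u₀ * ((u:R) * t) + v := by rw [hval2, hval, one_mul]; ring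
      have hstep : ∀ u : Rˣ, F {x : R | u₀ * x + v ∈ E} u = F E (U₀ * u) := by
        intro u
        rw [hFdef]; dsimp only
        have h3 : (fun x : Multiplicative R => ind {x : R | u₀ * x + v ∈ E} ((u:R) * x.toAdd))
            = fun x => (fun y : Multiplicative R => ind E (((U₀ * u : Rˣ) : R) * y.toAdd))
                (Multiplicative.ofAdd ((((U₀ * u)⁻¹ : Rˣ) : R) * v) * x) := by
          funext x
          rw [hind]; dsimp only
          rw [toAdd_mul, toAdd_ofAdd, harg u x.toAdd]
          rfl
        rw [h3]
        exact hminv _ _ (fun x => abs_le.mpr ⟨by linarith [(hind01 E (((U₀ * u : Rˣ) : R) * x.toAdd)).1],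
          (hind01 E (((U₀ * u : Rˣ) : R) * x.toAdd)).2⟩)
      have h4 : F {x : R | u₀ * x + v ∈ E} = fun u => F E (U₀ * u) := funext hstep
      dsimp only; rw [h4]
      exact hninv (F E) U₀ (hFabs E)
  · rintro ⟨lam, hb, huniv, hadd, hinv⟩
    refine ⟨exists_pair_ne R, mul_comm, fun {a} ha => ?_⟩
    by_contra hno
    push_neg at hno
    set I : Set R := {x : R | ∃ y, a * y = x} with hI
    have hlamI : lam I = 1 := by
      have h1 := hinv I a 0 ha
      have h2 : {x : R | a * x + 0 ∈ I} = Set.univ := by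
        ext x
        simp only [Set.mem_setOf_eq, Set.mem_univ, iff_true, hI, add_zero]
        exact ⟨x, rfl⟩
      rw [h2, huniv] at h1
      exact h1.symm
    have hlamI2 : lam {x : R | x + 1 ∈ I} = 1 := by
      have h1 := hinv I 1 1 one_ne_zero
      simp only [one_mul] at h1
      rw [h1, hlamI]
    have hdisj : Disjoint I {x : R | x + 1 ∈ I} := by
      rw [Set.disjoint_left]
      rintro x ⟨y, hy⟩ hx
      obtain ⟨z, hz⟩ := hx
      apply hno (z - y)
      rw [mul_sub, hy, hz, add_sub_cancel_left]
    have h5 := hadd I _ hdisj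
    have h6 := (hb (I ∪ {x : R | x + 1 ∈ I})).2
    rw [h5, hlamI, hlamI2] at h6
    norm_num at h6
end

section
/- Let R be an infinite countable integral domain and let p be a multiplicative minimal idempotent of R. Then for every B ∈ p and every r ∈ ℕ there exists a finite set Z ⊆ R of cardinality |Z| = r such that FS(Z) ⊆ B, where FS(Z) denotes the set of all sums ∑_{z ∈ Z'} z over nonempty subsets Z' ⊆ Z. -/
open Filter

/-- The sum of two ultrafilters on an additive structure:
`E ∈ p + q` iff `{u | {v | u + v ∈ E} ∈ q} ∈ p`. -/
def uadd {R : Type*} [Add R] (p q : Ultrafilter R) : Ultrafilter R :=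
  p.bind fun u => q.map fun v => u + v

/-- The product of two ultrafilters on a multiplicative structure:
`E ∈ p · q` iff `{u | {v | u · v ∈ E} ∈ q} ∈ p`. -/
def umul {R : Type*} [Mul R] (p q : Ultrafilter R) : Ultrafilter R :=
  p.bind fun u => q.map fun v => u * v

/-- A set of ultrafilters is additively invariant if it is stable under `q ↦ pure v + q`. -/
def addInvariant {R : Type*} [Add R] (Y : Set (Ultrafilter R)) : Prop :=
  ∀ v : R, ∀ q ∈ Y, uadd (pure v) q ∈ Y

/-- A set of ultrafilters is multiplicatively invariant if it is stable under
`q ↦ pure u · q` for all `u ≠ 0`. -/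
def mulInvariant {R : Type*} [Mul R] [Zero R] (Y : Set (Ultrafilter R)) : Prop :=
  ∀ u : R, u ≠ 0 → ∀ q ∈ Y, umul (pure u) q ∈ Y

/-- The set of additive minimal idempotent ultrafilters: nonprincipal additive idempotents
belonging to some minimal nonempty closed additively invariant set. -/
def AMI (R : Type*) [Add R] : Set (Ultrafilter R) :=
  {p | (∀ u : R, p ≠ pure u) ∧ uadd p p = p ∧
    ∃ Y : Set (Ultrafilter R), p ∈ Y ∧ IsClosed Y ∧ addInvariant Y ∧
      ∀ Z ⊆ Y, Z.Nonempty → IsClosed Z → addInvariant Z → Z = Y}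

/-- The set of multiplicative minimal idempotent ultrafilters: nonprincipal multiplicative
idempotents containing `R \ {0}` and belonging to some minimal nonempty closed
multiplicatively invariant set of ultrafilters containing `R \ {0}`. -/
def MMI (R : Type*) [Mul R] [Zero R] : Set (Ultrafilter R) :=
  {p | (∀ u : R, p ≠ pure u) ∧ {u : R | u ≠ 0} ∈ p ∧ umul p p = p ∧
    ∃ Y : Set (Ultrafilter R), p ∈ Y ∧ IsClosed Y ∧ (∀ q ∈ Y, {u : R | u ≠ 0} ∈ q) ∧
      mulInvariant Y ∧ ∀ Z ⊆ Y, Z.Nonempty → IsClosed Z → mulInvariant Z → Z = Y}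

/-- The family 𝒢: ultrafilters in the closure of the additive minimal idempotents that are
also multiplicative minimal idempotents. -/
def dcG (R : Type*) [Add R] [Mul R] [Zero R] : Set (Ultrafilter R) :=
  closure (AMI R) ∩ MMI R

section Aux

attribute [local instance] Ultrafilter.add Ultrafilter.addSemigroup

variable {R : Type*}

theorem mem_uadd [Add R] {p q : Ultrafilter R} {s : Set R} :
    s ∈ uadd p q ↔ {u | {v | u + v ∈ s} ∈ q} ∈ p := Iff.rfl

theorem mem_umul [Mul R] {p q : Ultrafilter R} {s : Set R} :
    s ∈ umul p q ↔ {u | {v | u * v ∈ s} ∈ q} ∈ p := Iff.rfl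

theorem mem_umul_pure [Mul R] {q : Ultrafilter R} {u : R} {s : Set R} :
    s ∈ umul (pure u) q ↔ {v | u * v ∈ s} ∈ q := by
  rw [mem_umul]; exact Ultrafilter.mem_pure

theorem compl_singleton_mem {q : Ultrafilter R} (h : ∀ z : R, q ≠ pure z) (z : R) :
    {z}ᶜ ∈ q := by
  rw [Ultrafilter.compl_mem_iff_notMem]
  intro hz
  obtain ⟨x, _, hfe⟩ := Ultrafilter.eq_pure_of_finite_mem (Set.finite_singleton z) hz
  exact h x hfe

/-- Mathlib's ultrafilter addition agrees with `uadd`. -/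
theorem add_eq_uadd [AddSemigroup R] (p q : Ultrafilter R) : p + q = uadd p q := by
  apply Ultrafilter.coe_inj.mp
  apply Filter.ext
  intro s
  exact (Ultrafilter.eventually_add p q (· ∈ s))

/-- Existence of a nonprincipal additive idempotent ultrafilter on an infinite
additive group. -/
theorem exists_nonprincipal_uadd_idem (R : Type*) [AddCommGroup R] [Infinite R] :
    ∃ q : Ultrafilter R, (∀ z : R, q ≠ pure z) ∧ uadd q q = q := by
  set S : Set (Ultrafilter R) := {q | ∀ z : R, {z}ᶜ ∈ q} with hS
  have hSne : S.Nonempty := ⟨Filter.hyperfilter R, fun z =>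
    (Set.finite_singleton z).compl_mem_hyperfilter⟩
  have hScl : IsClosed S := by
    have : S = ⋂ z : R, {q : Ultrafilter R | {z}ᶜ ∈ q} := by
      ext q; simp [hS, Set.mem_iInter]
    rw [this]
    exact isClosed_iInter fun z => ultrafilter_isClosed_basic _
  have hSadd : ∀ p ∈ S, ∀ q ∈ S, p + q ∈ S := by
    intro p _ q hq z
    rw [add_eq_uadd, mem_uadd]
    have : ∀ u : R, {v | u + v ∈ ({z}ᶜ : Set R)} = ({z - u}ᶜ : Set R) := by
      intro u
      ext v
      simp only [Set.mem_setOf_eq, Set.mem_compl_iff, Set.mem_singleton_iff]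
      constructor
      · intro h h'; exact h (by rw [h']; abel)
      · intro h h'; exact h (by rw [← h']; abel)
    have : {u : R | {v | u + v ∈ ({z}ᶜ : Set R)} ∈ q} = Set.univ := by
      ext u
      simp only [Set.mem_setOf_eq, Set.mem_univ, iff_true, this u]
      exact hq (z - u)
    rw [this]
    exact Filter.univ_mem
  obtain ⟨q, hqS, hidem⟩ := exists_idempotent_in_compact_add_subsemigroup
    (fun r => Ultrafilter.continuous_add_left r) S hSne hScl.isCompact hSadd
  refine ⟨q, fun z hz => ?_, by rw [← add_eq_uadd]; exact hidem⟩
  have := hqS z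
  rw [hz] at this
  exact (Ultrafilter.mem_pure.mp this) rfl

/-- `hasFS r C` : there is a finite set of size `r` all of whose nonempty subset sums lie in C. -/
def hasFS [AddCommMonoid R] (r : ℕ) (C : Set R) : Prop :=
  ∃ Z : Finset R, Z.card = r ∧ ∀ Z' ⊆ Z, Z'.Nonempty → (∑ z ∈ Z', z) ∈ C

/-- Pushing a `hasFS` witness through an injective additive map. -/
theorem hasFS_map [AddCommMonoid R] {r : ℕ} {C D : Set R} (f : R → R)
    (hf : Function.Injective f)
    (hsum : ∀ s : Finset R, (∑ z ∈ s, f z) = f (∑ z ∈ s, z))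
    (hmem : ∀ v ∈ C, f v ∈ D) (h : hasFS r C) : hasFS r D := by
  classical
  obtain ⟨Z, hcard, hZ⟩ := h
  refine ⟨Z.image f, by rw [Finset.card_image_of_injective _ hf, hcard], ?_⟩
  intro W hW hWne
  set Z₀ : Finset R := Z.filter (fun z => f z ∈ W) with hZ₀
  have hWeq : W = Z₀.image f := by
    ext w
    constructor
    · intro hw
      obtain ⟨z, hz, rfl⟩ := Finset.mem_image.mp (hW hw)
      exact Finset.mem_image.mpr ⟨z, Finset.mem_filter.mpr ⟨hz, hw⟩, rfl⟩
    · intro hw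
      obtain ⟨z, hz, rfl⟩ := Finset.mem_image.mp hw
      exact (Finset.mem_filter.mp hz).2
  have hZ₀sub : Z₀ ⊆ Z := Finset.filter_subset _ _
  have hZ₀ne : Z₀.Nonempty := by
    obtain ⟨w, hw⟩ := hWne
    rw [hWeq] at hw
    obtain ⟨z, hz, rfl⟩ := Finset.mem_image.mp hw
    exact ⟨z, hz⟩
  have : (∑ w ∈ W, w) = f (∑ z ∈ Z₀, z) := by
    rw [hWeq, Finset.sum_image (fun a _ b _ hab => hf hab), hsum]
  rw [this]
  exact hmem _ (hZ Z₀ hZ₀sub hZ₀ne)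

/-- Any member of a nonprincipal additive idempotent ultrafilter contains an FS-set
of any finite size. -/
theorem uadd_idem_hasFS [AddCommMonoid R] {q : Ultrafilter R}
    (hq : uadd q q = q) (hnp : ∀ z : R, q ≠ pure z) (r : ℕ) :
    ∀ C ∈ q, hasFS r C := by
  classical
  set star : Set R → Set R := fun C => C ∩ {u | {v | u + v ∈ C} ∈ q} with hstardef
  have hstar : ∀ C ∈ q, star C ∈ q := by
    intro C hC
    refine Filter.inter_mem hC ?_
    have : C ∈ uadd q q := by rw [hq]; exact hC
    exact mem_uadd.mp this
  have hstep : ∀ C ∈ q, ∀ u ∈ star C, {v | u + v ∈ star C} ∈ q := by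
    intro C _ u hu
    have huC : u ∈ C := hu.1
    have hD : {v | u + v ∈ C} ∈ q := hu.2
    have h2 : {v | {w | v + w ∈ {v' | u + v' ∈ C}} ∈ q} ∈ q := by
      have : {v | u + v ∈ C} ∈ uadd q q := by rw [hq]; exact hD
      exact mem_uadd.mp this
    have hsetEq : ∀ v : R, {w | v + w ∈ {v' | u + v' ∈ C}} = {w | (u + v) + w ∈ C} := by
      intro v; ext w; simp [Set.mem_setOf_eq, add_assoc]
    refine Filter.mem_of_superset (Filter.inter_mem h2 hD) ?_
    rintro v ⟨hv1, hv2⟩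
    refine ⟨hv2, ?_⟩
    have h3 : {w | v + w ∈ {v' | u + v' ∈ C}} ∈ q := hv1
    rw [hsetEq v] at h3
    exact h3
  intro C hC
  suffices h : ∃ Z : Finset R, Z.card = r ∧ ∀ Z' ⊆ Z, Z'.Nonempty → (∑ z ∈ Z', z) ∈ star C by
    obtain ⟨Z, h1, h2⟩ := h
    exact ⟨Z, h1, fun Z' hsub hne => (h2 Z' hsub hne).1⟩
  induction r with
  | zero =>
    refine ⟨∅, rfl, fun Z' hsub hne => ?_⟩
    rw [Finset.subset_empty.mp hsub] at hne
    exact absurd hne (by simp)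
  | succ r ih =>
    obtain ⟨Z, hcard, hsums⟩ := ih
    have hE1 : star C ∈ q := hstar C hC
    have hE2 : (⋂ Z' ∈ Z.powerset, {v : R | Z'.Nonempty → (∑ z ∈ Z', z) + v ∈ star C}) ∈ q := by
      refine (Filter.biInter_finset_mem _).mpr ?_
      intro Z' hZ'
      by_cases hne : Z'.Nonempty
      · have := hstep C hC _ (hsums Z' (Finset.mem_powerset.mp hZ') hne)
        exact Filter.mem_of_superset this (fun v hv _ => hv)
      · exact Filter.mem_of_superset Filter.univ_mem (fun v _ h => absurd h hne)
    have hE3 : (⋂ z ∈ Z, ({z}ᶜ : Set R)) ∈ q := by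
      refine (Filter.biInter_finset_mem _).mpr ?_
      intro z _
      exact compl_singleton_mem hnp z
    obtain ⟨e, he⟩ := Ultrafilter.nonempty_of_mem
      (Filter.inter_mem hE1 (Filter.inter_mem hE2 hE3))
    obtain ⟨he1, he2, he3⟩ := he
    have heZ : e ∉ Z := by
      intro hmem
      have := Set.mem_iInter₂.mp he3 e hmem
      exact this rfl
    refine ⟨insert e Z, by rw [Finset.card_insert_of_notMem heZ, hcard], ?_⟩
    intro W hW hWne
    by_cases heW : e ∈ W
    · have hsub : W.erase e ⊆ Z := by
        intro z hz
        have hne : z ≠ e := (Finset.mem_erase.mp hz).1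
        have := hW (Finset.mem_of_mem_erase hz)
        exact (Finset.mem_insert.mp this).resolve_left hne
      have hsum : (∑ z ∈ W, z) = e + ∑ z ∈ W.erase e, z :=
        (Finset.add_sum_erase _ _ heW).symm
      by_cases herase : (W.erase e).Nonempty
      · have h1 := Set.mem_iInter₂.mp he2 (W.erase e) (Finset.mem_powerset.mpr hsub) herase
        rw [hsum, add_comm]
        exact h1
      · have hempty : W.erase e = ∅ := Finset.not_nonempty_iff_eq_empty.mp herase
        rw [hsum, hempty, Finset.sum_empty, add_zero]
        exact he1
    · refine hsums W (fun z hz => ?_) hWne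
      have := hW hz
      exact (Finset.mem_insert.mp this).resolve_left (fun h => heW (h ▸ hz))

/-- The set of ultrafilters all of whose members have an FS-set of size r. -/
def SFS [AddCommMonoid R] (r : ℕ) : Set (Ultrafilter R) :=
  {q | ∀ C ∈ q, hasFS r C}

theorem SFS_closed [AddCommMonoid R] (r : ℕ) : IsClosed (SFS (R := R) r) := by
  have h : (SFS (R := R) r)ᶜ = ⋃ C : {C : Set R // ¬ hasFS r C}, {q | (C : Set R) ∈ q} := by
    ext q
    simp only [Set.mem_compl_iff, SFS, Set.mem_setOf_eq, Set.mem_iUnion, not_forall]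
    constructor
    · rintro ⟨C, hCq, hC⟩; exact ⟨⟨C, hC⟩, hCq⟩
    · rintro ⟨⟨C, hC⟩, hCq⟩; exact ⟨C, hCq, hC⟩
  rw [← isOpen_compl_iff, h]
  exact isOpen_iUnion fun C => ultrafilter_isOpen_basic _

variable [CommRing R] [IsDomain R]

theorem SFS_mul_left {r : ℕ} {u : R} (hu : u ≠ 0) {q : Ultrafilter R}
    (hq : q ∈ SFS (R := R) r) : umul (pure u) q ∈ SFS (R := R) r := by
  intro C hC
  have h1 : {v | u * v ∈ C} ∈ q := mem_umul_pure.mp hC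
  exact hasFS_map (fun v => u * v) (mul_right_injective₀ hu)
    (fun s => (Finset.mul_sum _ _ _).symm) (fun v hv => hv) (hq _ h1)

theorem SFS_mul_right {r : ℕ} {q y : Ultrafilter R} (hq : q ∈ SFS (R := R) r)
    (hy : {v : R | v ≠ 0} ∈ y) : umul q y ∈ SFS (R := R) r := by
  classical
  intro C hC
  have hD : {u | {v | u * v ∈ C} ∈ y} ∈ q := mem_umul.mp hC
  obtain ⟨Z, hcard, hZ⟩ := hq _ hD
  have hT : ({v : R | v ≠ 0} ∩
      ⋂ Z' ∈ Z.powerset, {v : R | Z'.Nonempty → (∑ z ∈ Z', z) * v ∈ C}) ∈ y := by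
    refine Filter.inter_mem hy ?_
    refine (Filter.biInter_finset_mem _).mpr ?_
    intro Z' hZ'
    by_cases hne : Z'.Nonempty
    · have := hZ Z' (Finset.mem_powerset.mp hZ') hne
      exact Filter.mem_of_superset this (fun v hv _ => hv)
    · exact Filter.mem_of_superset Filter.univ_mem (fun v _ h => absurd h hne)
  obtain ⟨w, hw1, hw2⟩ := Ultrafilter.nonempty_of_mem hT
  refine hasFS_map (fun x => x * w) (mul_left_injective₀ hw1)
    (fun s => (Finset.sum_mul _ _ _).symm) (fun v hv => hv)
    ⟨Z, hcard, fun Z' hsub hne => ?_⟩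
  exact Set.mem_iInter₂.mp hw2 Z' (Finset.mem_powerset.mpr hsub) hne

omit [IsDomain R] in
theorem umul_left_limit {Y : Set (Ultrafilter R)} (hY : IsClosed Y)
    {p q₀ : Ultrafilter R} (h0 : {u : R | u ≠ 0} ∈ q₀)
    (hinv : ∀ u : R, u ≠ 0 → umul (pure u) p ∈ Y) : umul q₀ p ∈ Y := by
  rw [← hY.closure_eq]
  rw [(ultrafilterBasis_is_basis (α := R)).mem_closure_iff]
  rintro o ⟨s, rfl⟩ hmem
  have h1 : {u : R | {v | u * v ∈ s} ∈ p} ∈ q₀ := mem_umul.mp hmem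
  obtain ⟨u, hu1, hu2⟩ := Ultrafilter.nonempty_of_mem (Filter.inter_mem h1 h0)
  exact ⟨umul (pure u) p, mem_umul_pure.mpr hu1, hinv u hu2⟩

end Aux

/-- Let `R` be an infinite countable integral domain and `p` a multiplicative
minimal idempotent. Every `B ∈ p` contains, for each `r ∈ ℕ`, a set of finite sums `FS(Z)` of
a set `Z` of cardinality `r`. -/
theorem stmt9 {R : Type*} [CommRing R] [IsDomain R] [Countable R] [Infinite R]
    (p : Ultrafilter R) (hp : p ∈ MMI R) (B : Set R) (hB : B ∈ p) (r : ℕ) :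
    ∃ Z : Finset R, Z.card = r ∧ ∀ Z' ⊆ Z, Z'.Nonempty → (∑ z ∈ Z', z) ∈ B := by
  obtain ⟨hnp, h0, hidem, Y, hpY, hYc, hY0, hYinv, hYmin⟩ := hp
  obtain ⟨q₀, hq₀np, hq₀idem⟩ := exists_nonprincipal_uadd_idem R
  have hq₀FS : q₀ ∈ SFS (R := R) r := fun C hC => uadd_idem_hasFS hq₀idem hq₀np r C hC
  have hq₀0 : {u : R | u ≠ 0} ∈ q₀ := by
    have h := compl_singleton_mem hq₀np 0
    have he : ({0}ᶜ : Set R) = {u : R | u ≠ 0} := by ext u; simp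
    rwa [he] at h
  have hwY : umul q₀ p ∈ Y := umul_left_limit hYc hq₀0 (fun u hu => hYinv u hu p hpY)
  have hwS : umul q₀ p ∈ SFS (R := R) r := SFS_mul_right hq₀FS h0
  have hZY : (Y ∩ SFS (R := R) r) = Y :=
    hYmin _ Set.inter_subset_left ⟨umul q₀ p, hwY, hwS⟩ (hYc.inter (SFS_closed r))
      (fun u hu q' hq' => ⟨hYinv u hu q' hq'.1, SFS_mul_left hu hq'.2⟩)
  have hpS : p ∈ SFS (R := R) r := by rw [← hZY] at hpY; exact hpY.2
  exact hpS B hB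
end

section
/- Let R be a LID, let p be an ultrafilter on R lying in the topological closure of AMI in βR, and let u ∈ R be nonzero. Then: (i) pure(u)·p lies in the closure of AMI; and (ii) there exists an ultrafilter q in the closure of AMI such that pure(u)·q = p. -/
open Filter

/-- A countable infinite integral domain `R` is a large ideal domain (LID) when, for every
nonzero `x`, the ideal `xR` has finite index as an additive subgroup of `R`. -/
def IsLID (R : Type*) [CommRing R] : Prop :=
  ∀ x : R, x ≠ 0 → (Ideal.span ({x} : Set R)).toAddSubgroup.FiniteIndex

section Stmt11Helpers

open Set Function

namespace Stmt11

lemma mem_ubind {α β : Type*} {f : Ultrafilter α} {m : α → Ultrafilter β} {s : Set β} :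
    s ∈ f.bind m ↔ {a | s ∈ m a} ∈ f := by
  rw [← Ultrafilter.mem_coe]
  change s ∈ Filter.bind ↑f (fun x => ↑(m x)) ↔ _
  rw [Filter.mem_bind']
  exact Iff.rfl

lemma mem_uadd {S : Type*} [Add S] {p q : Ultrafilter S} {s : Set S} :
    s ∈ uadd p q ↔ {a : S | (fun v => a + v) ⁻¹' s ∈ q} ∈ p := by
  unfold uadd
  rw [mem_ubind]
  simp only [Ultrafilter.mem_map]

lemma ubind_pure {α β : Type*} (v : α) (f : α → Ultrafilter β) :
    (pure v : Ultrafilter α).bind f = f v := by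
  apply Ultrafilter.ext
  intro s
  rw [mem_ubind]
  simp only [Ultrafilter.mem_pure, Set.mem_setOf_eq]

lemma uadd_pure_left {S : Type*} [Add S] (v : S) (q : Ultrafilter S) :
    uadd (pure v) q = q.map (fun x => v + x) := by
  unfold uadd; exact ubind_pure v _

lemma umul_pure_left {S : Type*} [Mul S] (v : S) (q : Ultrafilter S) :
    umul (pure v) q = q.map (fun x => v * x) := by
  unfold umul; exact ubind_pure v _

lemma uadd_pure_pure_left {S : Type*} [AddSemigroup S] (v w : S) (q : Ultrafilter S) :
    uadd (pure v) (uadd (pure w) q) = uadd (pure (v + w)) q := by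
  simp only [uadd_pure_left, Ultrafilter.map_map]
  congr 1
  funext x
  simp [Function.comp, add_assoc]

lemma uadd_pure_zero {S : Type*} [AddMonoid S] (q : Ultrafilter S) :
    uadd (pure (0 : S)) q = q := by
  rw [uadd_pure_left]
  have h : (fun x : S => (0 : S) + x) = id := funext fun x => zero_add x
  rw [h]
  exact Ultrafilter.map_id q

lemma umap_continuous {α β : Type*} (f : α → β) : Continuous (Ultrafilter.map f) := by
  apply continuous_generateFrom_iff.mpr
  rintro S ⟨s, rfl⟩
  have h : (Ultrafilter.map f) ⁻¹' {u : Ultrafilter β | s ∈ u}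
      = {q : Ultrafilter α | f ⁻¹' s ∈ q} := by
    ext q; exact Ultrafilter.mem_map
  rw [h]
  exact ultrafilter_isOpen_basic _

lemma tr_continuous {S : Type*} [Add S] (v : S) :
    Continuous (fun q : Ultrafilter S => uadd (pure v) q) := by
  have h : (fun q : Ultrafilter S => uadd (pure v) q) = Ultrafilter.map (fun x => v + x) :=
    funext fun q => uadd_pure_left v q
  rw [h]
  exact umap_continuous _

lemma umap_uadd {S T : Type*} [Add S] [Add T] (f : S → T)
    (hf : ∀ a b, f (a + b) = f a + f b) (p q : Ultrafilter S) :
    (uadd p q).map f = uadd (p.map f) (q.map f) := by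
  apply Ultrafilter.ext
  intro s
  rw [Ultrafilter.mem_map, mem_uadd, mem_uadd, Ultrafilter.mem_map, Set.preimage_setOf_eq]
  simp only [Ultrafilter.mem_map]
  have h : ∀ a : S, (fun v => a + v) ⁻¹' (f ⁻¹' s) = f ⁻¹' ((fun v => f a + v) ⁻¹' s) := by
    intro a; ext x; simp [hf]
  simp only [h]

lemma umap_inj {α β : Type*} {f : α → β} (hf : Function.Injective f) :
    Function.Injective (Ultrafilter.map f) := by
  intro p q h
  apply Ultrafilter.ext
  intro s
  have hs : ∀ r : Ultrafilter α, s ∈ r ↔ f '' s ∈ r.map f := fun r => by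
    rw [Ultrafilter.mem_map, Set.preimage_image_eq s hf]
  rw [hs p, hs q, h]

end Stmt11

end Stmt11Helpers
section Stmt11Orb

open Set Function

namespace Stmt11

variable {S : Type*} [AddGroup S]

/-- The orbit closure of an ultrafilter under translations by principal ultrafilters. -/
def orb (q : Ultrafilter S) : Set (Ultrafilter S) :=
  closure (Set.range fun v : S => uadd (pure v) q)

lemma orb_isClosed (q : Ultrafilter S) : IsClosed (orb q) := isClosed_closure

lemma tr_mem_orb (v : S) (q : Ultrafilter S) : uadd (pure v) q ∈ orb q :=
  subset_closure ⟨v, rfl⟩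

lemma mem_orb_self (q : Ultrafilter S) : q ∈ orb q := by
  have h := tr_mem_orb (0 : S) q
  rwa [uadd_pure_zero] at h

lemma orb_addInvariant (q : Ultrafilter S) : addInvariant (orb q) := by
  intro v r hr
  have hc : Continuous (fun x : Ultrafilter S => uadd (pure v) x) := tr_continuous v
  have h1 : uadd (pure v) r ∈
      (fun x : Ultrafilter S => uadd (pure v) x) '' orb q := ⟨r, hr, rfl⟩
  have h2 : (fun x : Ultrafilter S => uadd (pure v) x) '' orb q ⊆
      closure ((fun x : Ultrafilter S => uadd (pure v) x) ''
        (Set.range fun w : S => uadd (pure w) q)) :=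
    image_closure_subset_closure_image hc
  have h3 : ((fun x : Ultrafilter S => uadd (pure v) x) ''
      (Set.range fun w : S => uadd (pure w) q)) ⊆
      (Set.range fun w : S => uadd (pure w) q) := by
    rintro _ ⟨_, ⟨w, rfl⟩, rfl⟩
    exact ⟨v + w, (uadd_pure_pure_left v w q).symm⟩
  exact closure_mono h3 (h2 h1)

lemma orb_subset {Y : Set (Ultrafilter S)} (hY : IsClosed Y) (hInv : addInvariant Y)
    {q : Ultrafilter S} (hq : q ∈ Y) : orb q ⊆ Y := by
  apply closure_minimal _ hY
  rintro _ ⟨v, rfl⟩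
  exact hInv v q hq

lemma orb_mono {q r : Ultrafilter S} (hr : r ∈ orb q) : orb r ⊆ orb q :=
  orb_subset (orb_isClosed q) (orb_addInvariant q) hr

lemma orb_tr_eq (v : S) (q : Ultrafilter S) : orb (uadd (pure v) q) = orb q := by
  apply subset_antisymm (orb_mono (tr_mem_orb v q))
  apply orb_mono
  have h := orb_addInvariant (uadd (pure v) q) (-v) _ (mem_orb_self (uadd (pure v) q))
  rwa [uadd_pure_pure_left, neg_add_cancel, uadd_pure_zero] at h

lemma mem_AMI_iff {p : Ultrafilter S} :
    p ∈ AMI S ↔ (∀ v : S, p ≠ pure v) ∧ uadd p p = p ∧ ∀ q ∈ orb p, p ∈ orb q := by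
  constructor
  · rintro ⟨h1, h2, Y, hpY, hYc, hYinv, hYmin⟩
    refine ⟨h1, h2, fun q hq => ?_⟩
    have hop : orb p = Y :=
      hYmin (orb p) (orb_subset hYc hYinv hpY) ⟨p, mem_orb_self p⟩ (orb_isClosed p)
        (orb_addInvariant p)
    have hoq : orb q = Y :=
      hYmin (orb q) (hop ▸ orb_mono hq) ⟨q, mem_orb_self q⟩ (orb_isClosed q)
        (orb_addInvariant q)
    rw [hoq]
    exact hpY
  · rintro ⟨h1, h2, h3⟩
    refine ⟨h1, h2, orb p, mem_orb_self p, orb_isClosed p, orb_addInvariant p, ?_⟩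
    intro Z hZsub ⟨q, hq⟩ hZc hZinv
    have hpq : p ∈ orb q := h3 q (hZsub hq)
    have h4 : orb q ⊆ Z := orb_subset hZc hZinv hq
    exact subset_antisymm hZsub (Set.Subset.trans (orb_subset hZc hZinv (h4 hpq)) (fun x hx => hx))

end Stmt11

end Stmt11Orb
section Stmt11Ring

open Set Function

namespace Stmt11

variable {R : Type*} [CommRing R]

lemma idem_mem_addSubgroup (H : AddSubgroup R) [Finite (R ⧸ H)] {p : Ultrafilter R}
    (hp : uadd p p = p) : (H : Set R) ∈ p := by
  set π := QuotientAddGroup.mk' H with hπdef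
  have hq : uadd (p.map ⇑π) (p.map ⇑π) = p.map ⇑π := by
    rw [← umap_uadd (⇑π) (map_add π), hp]
  obtain ⟨c, hc⟩ := Ultrafilter.eq_pure_of_finite (p.map ⇑π)
  have hcc : c + c = c := by
    have h1 : uadd (pure c) (pure c) = pure (c + c) := by
      rw [uadd_pure_left, Ultrafilter.map_pure]
    rw [hc, h1] at hq
    exact Ultrafilter.pure_injective hq
  have hc0 : c = 0 := by
    have h2 : c + c = c + 0 := by rw [hcc, add_zero]
    exact (add_left_cancel h2).symm ▸ rfl
  have h3 : ({(0 : R ⧸ H)} : Set (R ⧸ H)) ∈ p.map ⇑π := by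
    rw [hc, hc0]
    exact Ultrafilter.mem_pure.mpr rfl
  rw [Ultrafilter.mem_map] at h3
  refine Ultrafilter.mem_coe.mp (Filter.mem_of_superset (Ultrafilter.mem_coe.mpr h3) ?_)
  intro x hx
  simp only [Set.mem_preimage, Set.mem_singleton_iff] at hx
  exact (QuotientAddGroup.eq_zero_iff x).mp hx

lemma decompose (u x : R) :
    ∃ (c : R ⧸ (Ideal.span ({u} : Set R)).toAddSubgroup) (s : R),
      x = Quotient.out c + u * s := by
  set H := (Ideal.span ({u} : Set R)).toAddSubgroup with hH
  obtain ⟨h, hh⟩ := QuotientAddGroup.mk_out_eq_mul H x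
  have hmem : (h : R) ∈ Ideal.span ({u} : Set R) := h.2
  obtain ⟨y, hy⟩ := Ideal.mem_span_singleton.mp hmem
  refine ⟨QuotientAddGroup.mk x, -y, ?_⟩
  rw [mul_neg, ← hy, hh]
  abel

lemma map_mul_uadd_pure (u v : R) (q : Ultrafilter R) :
    (uadd (pure v) q).map (fun x => u * x) = uadd (pure (u * v)) (q.map (fun x => u * x)) := by
  simp only [uadd_pure_left, Ultrafilter.map_map]
  congr 1
  funext x
  simp [Function.comp, mul_add]

lemma image_orb_subset (u : R) (q : Ultrafilter R) :
    Ultrafilter.map (fun x => u * x) '' orb q ⊆ orb (q.map (fun x => u * x)) := by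
  have h1 : Ultrafilter.map (fun x => u * x) '' orb q ⊆
      closure (Ultrafilter.map (fun x => u * x) '' (Set.range fun v : R => uadd (pure v) q)) :=
    image_closure_subset_closure_image (umap_continuous _)
  refine h1.trans (closure_mono ?_)
  rintro _ ⟨_, ⟨v, rfl⟩, rfl⟩
  exact ⟨u * v, (map_mul_uadd_pure u v q).symm⟩

lemma orb_map_subset (u : R) [Finite (R ⧸ (Ideal.span ({u} : Set R)).toAddSubgroup)]
    (q : Ultrafilter R) :
    orb (q.map (fun x => u * x)) ⊆
      ⋃ c : R ⧸ (Ideal.span ({u} : Set R)).toAddSubgroup,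
        (fun x => uadd (pure (Quotient.out c)) x) ''
          (Ultrafilter.map (fun x => u * x) '' orb q) := by
  set m := fun x : R => u * x with hm
  set M := ⋃ c : R ⧸ (Ideal.span ({u} : Set R)).toAddSubgroup,
      (fun x => uadd (pure (Quotient.out c)) x) '' (Ultrafilter.map m '' orb q) with hM
  have hclosed : IsClosed M := by
    apply isClosed_iUnion_of_finite
    intro c
    have h1 : IsCompact (orb q) := (orb_isClosed q).isCompact
    exact ((h1.image (umap_continuous m)).image (tr_continuous _)).isClosed
  have hmem : q.map m ∈ M := by
    obtain ⟨c, s, h0⟩ := decompose u 0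
    have he : q.map m = uadd (pure (Quotient.out c)) ((uadd (pure s) q).map m) := by
      rw [map_mul_uadd_pure, uadd_pure_pure_left, ← h0, uadd_pure_zero]
    rw [he]
    exact Set.mem_iUnion.mpr ⟨c, ⟨(uadd (pure s) q).map m,
      ⟨uadd (pure s) q, tr_mem_orb s q, rfl⟩, rfl⟩⟩
  have hinv : addInvariant M := by
    intro v x hx
    obtain ⟨c, hc⟩ := Set.mem_iUnion.mp hx
    obtain ⟨_, ⟨y, hy, rfl⟩, rfl⟩ := hc
    obtain ⟨c', s, h0⟩ := decompose u (v + Quotient.out c)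
    have he : uadd (pure v) (uadd (pure (Quotient.out c)) (y.map m))
        = uadd (pure (Quotient.out c')) ((uadd (pure s) y).map m) := by
      rw [map_mul_uadd_pure, uadd_pure_pure_left, uadd_pure_pure_left, ← h0]
    rw [he]
    exact Set.mem_iUnion.mpr ⟨c', ⟨(uadd (pure s) y).map m,
      ⟨uadd (pure s) y, orb_addInvariant q s y hy, rfl⟩, rfl⟩⟩
  exact orb_subset hclosed hinv hmem

lemma AMI_map [IsDomain R] {u : R} (hu : u ≠ 0)
    [Finite (R ⧸ (Ideal.span ({u} : Set R)).toAddSubgroup)]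
    {p : Ultrafilter R} (hp : p ∈ AMI R) : p.map (fun x => u * x) ∈ AMI R := by
  set m := fun x : R => u * x with hm
  have hminj : Function.Injective m := fun a b h => mul_left_cancel₀ hu h
  rw [mem_AMI_iff] at hp ⊢
  obtain ⟨h1, h2, h3⟩ := hp
  refine ⟨?_, ?_, ?_⟩
  · intro v hv
    have hv1 : ({v} : Set R) ∈ p.map m := by
      rw [hv]; exact Ultrafilter.mem_pure.mpr rfl
    rw [Ultrafilter.mem_map] at hv1
    have hsub : (m ⁻¹' {v}).Subsingleton := by
      intro a ha b hb
      simp only [Set.mem_preimage, Set.mem_singleton_iff] at ha hb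
      exact hminj (ha.trans hb.symm)
    obtain ⟨x, -, hx⟩ := Ultrafilter.eq_pure_of_finite_mem hsub.finite hv1
    exact h1 x hx
  · rw [← umap_uadd m (fun a b => mul_add u a b), h2]
  · intro q hq
    have hq' := orb_map_subset u p hq
    obtain ⟨c, hc⟩ := Set.mem_iUnion.mp hq'
    obtain ⟨_, ⟨y, hy, rfl⟩, rfl⟩ := hc
    rw [orb_tr_eq]
    exact image_orb_subset u y ⟨p, h3 y hy, rfl⟩

lemma AMI_preimage [IsDomain R] {u : R} (hu : u ≠ 0)
    [Finite (R ⧸ (Ideal.span ({u} : Set R)).toAddSubgroup)]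
    {p : Ultrafilter R} (hp : p ∈ AMI R) :
    ∃ q ∈ AMI R, q.map (fun x => u * x) = p := by
  set m := fun x : R => u * x with hm
  have hminj : Function.Injective m := fun a b h => mul_left_cancel₀ hu h
  have hrange : Set.range m ∈ p := by
    have hH : (((Ideal.span ({u} : Set R)).toAddSubgroup : AddSubgroup R) : Set R) ∈ p :=
      idem_mem_addSubgroup _ hp.2.1
    have heq : (((Ideal.span ({u} : Set R)).toAddSubgroup : AddSubgroup R) : Set R)
        = Set.range m := by
      ext x
      simp only [SetLike.mem_coe, Submodule.mem_toAddSubgroup, Ideal.mem_span_singleton,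
        Set.mem_range]
      constructor
      · rintro ⟨y, hy⟩; exact ⟨y, hy.symm⟩
      · rintro ⟨y, hy⟩; exact ⟨y, hy.symm⟩
    rwa [← heq]
  set q := p.comap hminj hrange with hqdef
  have hmq : q.map m = p := by
    apply Ultrafilter.ext
    intro s
    rw [Ultrafilter.mem_map, hqdef, Ultrafilter.mem_comap, Set.image_preimage_eq_inter_range]
    constructor
    · intro h
      exact Ultrafilter.mem_coe.mp
        (Filter.mem_of_superset (Ultrafilter.mem_coe.mpr h) Set.inter_subset_left)
    · intro h
      exact Ultrafilter.mem_coe.mp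
        (Filter.inter_mem (Ultrafilter.mem_coe.mpr h) (Ultrafilter.mem_coe.mpr hrange))
  refine ⟨q, ?_, hmq⟩
  rw [mem_AMI_iff] at hp ⊢
  obtain ⟨h1, h2, h3⟩ := hp
  refine ⟨?_, ?_, ?_⟩
  · intro v hv
    apply h1 (u * v)
    rw [← hmq, hv, Ultrafilter.map_pure]
  · apply umap_inj hminj
    rw [umap_uadd m (fun a b => mul_add u a b), hmq, h2]
  · intro r hr
    have hφr : r.map m ∈ orb p := by
      rw [← hmq]
      exact image_orb_subset u q ⟨r, hr, rfl⟩
    have hpm : p ∈ orb (r.map m) := h3 _ hφr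
    have h4 := orb_map_subset u r hpm
    obtain ⟨c, hc⟩ := Set.mem_iUnion.mp h4
    obtain ⟨_, ⟨s, hs, rfl⟩, hps0⟩ := hc
    have hps : uadd (pure (Quotient.out c)) (s.map m) = p := hps0
    have hex : ∃ z, Quotient.out c + u * z ∈ Set.range m := by
      have h5 : Set.range m ∈ uadd (pure (Quotient.out c)) (s.map m) := by
        rw [hps]; exact hrange
      rw [uadd_pure_left, Ultrafilter.mem_map, Ultrafilter.mem_map] at h5
      obtain ⟨z, hz⟩ := Ultrafilter.nonempty_of_mem h5
      exact ⟨z, hz⟩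
    obtain ⟨z, y, hy⟩ := hex
    have hout : Quotient.out c = u * (y - z) := by
      have hy' : u * y = Quotient.out c + u * z := hy
      have h6 : u * y - u * z = Quotient.out c := by rw [hy', add_sub_cancel_right]
      rw [← h6, mul_sub]
    have hps2 : (uadd (pure (y - z)) s).map m = p := by
      rw [map_mul_uadd_pure, ← hout, hps]
    have hqe : q = uadd (pure (y - z)) s := by
      apply umap_inj hminj
      rw [hmq, hps2]
    rw [hqe]
    exact orb_mono hs (tr_mem_orb _ s)

end Stmt11

end Stmt11Ring
/-- Let `R` be a LID, `p` an ultrafilter in the closure of the additive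
minimal idempotents, and `u ≠ 0`. Then `pure u · p` lies in the closure of `AMI`, and there is
`q` in the closure of `AMI` with `pure u · q = p`. -/
theorem stmt11 {R : Type*} [CommRing R] [IsDomain R] [Countable R] [Infinite R]
    (hLID : IsLID R)
    (p : Ultrafilter R) (hp : p ∈ closure (AMI R)) (u : R) (hu : u ≠ 0) :
    umul (pure u) p ∈ closure (AMI R) ∧ ∃ q ∈ closure (AMI R), umul (pure u) q = p := by
  haveI hFI : (Ideal.span ({u} : Set R)).toAddSubgroup.FiniteIndex := hLID u hu
  haveI : Finite (R ⧸ (Ideal.span ({u} : Set R)).toAddSubgroup) :=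
    AddSubgroup.finite_quotient_of_finiteIndex
  set m := fun x : R => u * x with hm
  constructor
  · rw [Stmt11.umul_pure_left]
    have h1 : Ultrafilter.map m '' AMI R ⊆ AMI R := by
      rintro _ ⟨x, hx, rfl⟩
      exact Stmt11.AMI_map hu hx
    have h2 : Ultrafilter.map m p ∈ Ultrafilter.map m '' closure (AMI R) := ⟨p, hp, rfl⟩
    have h3 := image_closure_subset_closure_image (f := Ultrafilter.map m)
      (Stmt11.umap_continuous m) h2
    exact closure_mono h1 h3
  · have hC : IsClosed (Ultrafilter.map m '' closure (AMI R)) :=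
      (isClosed_closure.isCompact.image (Stmt11.umap_continuous m)).isClosed
    have hsub : AMI R ⊆ Ultrafilter.map m '' closure (AMI R) := by
      intro x hx
      obtain ⟨q, hq, hqe⟩ := Stmt11.AMI_preimage hu hx
      exact ⟨q, subset_closure hq, hqe⟩
    have h4 : closure (AMI R) ⊆ Ultrafilter.map m '' closure (AMI R) :=
      closure_minimal hsub hC
    obtain ⟨q, hq, hqe⟩ := h4 hp
    exact ⟨q, hq, by rw [Stmt11.umul_pure_left]; exact hqe⟩
end

section
/- Let K be an infinite countable field. Then: (i) a set S ⊆ K is affinely syndetic if and only if d̄_{(F_N)}(S) > 0 for every double Følner sequence (F_N) in K; and (ii) a set T ⊆ K is affinely thick if and only if there exists a double Følner sequence (F_N) in K such that the lower density of T with respect to (F_N) equals 1. -/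
/-- A set `S ⊆ R` is affinely syndetic if there are finitely many affine maps
`x ↦ u·x + v` (with `u ≠ 0`) such that every `x ∈ R` is sent into `S` by one of them. -/
def AffSyndetic {R : Type*} [Mul R] [Add R] [Zero R] (S : Set R) : Prop :=
  ∃ F : Finset (R × R), (∀ g ∈ F, g.1 ≠ 0) ∧ ∀ x : R, ∃ g ∈ F, g.1 * x + g.2 ∈ S

/-- A set `T ⊆ R` is affinely thick if for every finite collection of affine maps
`x ↦ u·x + v` (with `u ≠ 0`) there is a single `x` sent into `T` by all of them. -/
def AffThick {R : Type*} [Mul R] [Add R] [Zero R] (T : Set R) : Prop :=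
  ∀ F : Finset (R × R), (∀ g ∈ F, g.1 ≠ 0) → ∃ x : R, ∀ g ∈ F, g.1 * x + g.2 ∈ T

/-- A double Følner sequence in a field `K`: a sequence of nonempty finite subsets of `K`
asymptotically invariant under every translation and under every nonzero dilation. -/
def DoubleFolner {K : Type*} [Field K] (F : ℕ → Finset K) : Prop :=
  (∀ N, (F N).Nonempty) ∧
  (∀ u : K, Filter.Tendsto
    (fun N => ((((F N : Set K) ∩ ((· + u) '' (F N : Set K))).ncard : ℝ) / (F N).card))
    Filter.atTop (nhds 1)) ∧
  (∀ u : K, u ≠ 0 → Filter.Tendsto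
    (fun N => ((((F N : Set K) ∩ ((u * ·) '' (F N : Set K))).ncard : ℝ) / (F N).card))
    Filter.atTop (nhds 1))

/-- The upper density of `E` with respect to the sequence of finite sets `F`. -/
noncomputable def upperDensity {K : Type*} (F : ℕ → Finset K) (E : Set K) : ℝ :=
  Filter.limsup (fun N => ((E ∩ (F N : Set K)).ncard : ℝ) / (F N).card) Filter.atTop

/-- The lower density of `E` with respect to the sequence of finite sets `F`. -/
noncomputable def lowerDensity {K : Type*} (F : ℕ → Finset K) (E : Set K) : ℝ :=
  Filter.liminf (fun N => ((E ∩ (F N : Set K)).ncard : ℝ) / (F N).card) Filter.atTop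

open Finset Filter
open scoped Pointwise

lemma abelian_folner {G : Type*} [CommGroup G] [DecidableEq G] (A : Finset G) (n : ℕ) :
    ∃ Φ : Finset G, Φ.Nonempty ∧ ∀ a ∈ A, (Φ \ Φ.image (a * ·)).card * n ≤ Φ.card := by
  classical
  rcases Nat.eq_zero_or_pos n with hn | hn
  · exact ⟨{1}, singleton_nonempty _, fun a _ => by simp [hn]⟩
  set B : Finset G := insert 1 A with hB
  set k : ℕ := B.card with hk
  have h1B : (1 : G) ∈ B := mem_insert_self _ _
  have h1M : ∀ M : ℕ, (1 : G) ∈ B ^ M := by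
    intro M
    induction M with
    | zero => simp
    | succ M ih => rw [pow_succ]; simpa using Finset.mul_mem_mul ih h1B
  have hsub : ∀ M : ℕ, B ^ M ⊆ B ^ (M + 1) := by
    intro M x hx
    rw [pow_succ]
    simpa using Finset.mul_mem_mul hx h1B
  have himg : ∀ a ∈ A, ∀ M : ℕ, (B ^ M).image (a * ·) ⊆ B ^ (M + 1) := by
    intro a ha M y hy
    simp only [Finset.mem_image] at hy
    obtain ⟨x, hx, rfl⟩ := hy
    rw [pow_succ, mul_comm a x]
    exact Finset.mul_mem_mul hx (mem_insert_of_mem ha)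
  -- membership description of B ^ M
  have hmem : ∀ M : ℕ, ∀ x ∈ B ^ M, ∃ f : ↥B → ℕ, (∀ b, f b ≤ M) ∧ x = ∏ b : ↥B, (b : G) ^ f b := by
    intro M
    induction M with
    | zero =>
      intro x hx
      rw [pow_zero, Finset.mem_one] at hx
      exact ⟨fun _ => 0, fun _ => le_refl 0, by simp [hx]⟩
    | succ M ih =>
      intro x hx
      rw [pow_succ] at hx
      rw [Finset.mem_mul] at hx
      obtain ⟨y, hy, b, hb, rfl⟩ := hx
      obtain ⟨f, hf, rfl⟩ := ih y hy
      refine ⟨fun c => if c = ⟨b, hb⟩ then f c + 1 else f c, ?_, ?_⟩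
      · intro c; dsimp only; split <;> [exact Nat.succ_le_succ (hf c); exact (hf c).trans (Nat.le_succ M)]
      · have : ∀ c : ↥B, (c : G) ^ (if c = ⟨b, hb⟩ then f c + 1 else f c)
            = (c : G) ^ f c * (if c = (⟨b, hb⟩ : ↥B) then (c : G) else 1) := by
          intro c; split <;> simp [pow_succ]
        rw [Finset.prod_congr rfl (fun c _ => this c), Finset.prod_mul_distrib]
        simp
  have hcard : ∀ M : ℕ, (B ^ M).card ≤ (M + 1) ^ k := by
    intro M
    have hs : Set.SurjOn (fun f : ↥B → Fin (M + 1) => ∏ b : ↥B, (b : G) ^ (f b : ℕ))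
        (Finset.univ : Finset (↥B → Fin (M + 1))) (↑(B ^ M) : Set G) := by
      intro x hx
      obtain ⟨f, hf, rfl⟩ := hmem M x hx
      refine ⟨fun b => ⟨f b, Nat.lt_succ_of_le (hf b)⟩, by simp, rfl⟩
    calc (B ^ M).card ≤ (Finset.univ : Finset (↥B → Fin (M + 1))).card :=
          Finset.card_le_card_of_surjOn _ hs
      _ = (M + 1) ^ k := by
          simp [Finset.card_univ, hk]
  -- pigeonhole: find good M
  have hgood : ∃ M : ℕ, ((B ^ (M + 1)).card - (B ^ M).card) * n ≤ (B ^ M).card := by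
    by_contra hcon
    push_neg at hcon
    have hgrow : ∀ M : ℕ, (n + 1) ^ M ≤ n ^ M * (B ^ M).card := by
      intro M
      induction M with
      | zero => simp
      | succ M ih =>
        have h1 := hcon M
        have h2 : (B ^ M).card ≤ (B ^ (M + 1)).card := Finset.card_le_card (hsub M)
        have h3 : (B ^ M).card + 1 ≤ ((B ^ (M + 1)).card - (B ^ M).card) * n := h1
        calc (n + 1) ^ (M + 1) = (n + 1) ^ M * n + (n + 1) ^ M := by ring
          _ ≤ n ^ M * (B ^ M).card * n + n ^ M * (B ^ M).card := by
              exact Nat.add_le_add (Nat.mul_le_mul_right n ih) ih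
          _ ≤ n ^ (M + 1) * (B ^ M).card + n ^ (M + 1) * ((B ^ (M+1)).card - (B ^ M).card) := by
              refine Nat.add_le_add (by ring_nf; exact le_refl _) ?_
              calc n ^ M * (B ^ M).card ≤ n ^ M * (((B ^ (M + 1)).card - (B ^ M).card) * n) :=
                    Nat.mul_le_mul_left _ (le_of_lt h1)
                _ = n ^ (M + 1) * ((B ^ (M+1)).card - (B ^ M).card) := by ring
          _ = n ^ (M + 1) * ((B ^ M).card + ((B ^ (M+1)).card - (B ^ M).card)) := by ring
          _ = n ^ (M + 1) * (B ^ (M + 1)).card := by rw [Nat.add_sub_cancel' h2]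
    -- contradiction with polynomial growth
    have hr : (1 : ℝ) < ((n : ℝ) + 1) / n := by
      rw [lt_div_iff₀ (by positivity)]
      simp
    obtain ⟨N₀, hN₀⟩ := (Metric.tendsto_atTop.1
      (tendsto_pow_const_div_const_pow_of_one_lt k hr)) (1 / (((n : ℝ) + 1) / n))
      (by positivity)
    have hM := hN₀ (N₀ + 1) (Nat.le_succ _)
    set r : ℝ := ((n : ℝ) + 1) / n with hrdef
    set M : ℕ := N₀ with hMdef
    -- from hM : dist ((M+1)^k / r^(M+1)) 0 < 1/r
    have h5 : ((M + 1 : ℕ) : ℝ) ^ k / r ^ (M + 1) < 1 / r := by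
      have := hM
      rw [Real.dist_eq, sub_zero, abs_of_nonneg (by positivity)] at this
      exact this
    have hrpos : (0:ℝ) < r := lt_trans one_pos hr
    have h6 : ((M + 1 : ℕ) : ℝ) ^ k < r ^ M := by
      rw [div_lt_div_iff₀ (by positivity) hrpos] at h5
      have h5' : ((M + 1 : ℕ) : ℝ) ^ k * r < r ^ M * r := by
        rw [← pow_succ]; linarith
      exact lt_of_mul_lt_mul_right h5' hrpos.le
    have h7 : ((n : ℝ) + 1) ^ M ≤ (n : ℝ) ^ M * ((M + 1 : ℕ) : ℝ) ^ k := by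
      have := (hgrow M).trans (Nat.mul_le_mul_left _ (hcard M))
      calc ((n : ℝ) + 1) ^ M = (((n + 1) ^ M : ℕ) : ℝ) := by push_cast; ring
        _ ≤ ((n ^ M * (M + 1) ^ k : ℕ) : ℝ) := by exact_mod_cast this
        _ = (n : ℝ) ^ M * ((M + 1 : ℕ) : ℝ) ^ k := by push_cast; ring
    have hnne : (n : ℝ) ≠ 0 := by positivity
    have h8 : (n : ℝ) ^ M * r ^ M = ((n : ℝ) + 1) ^ M := by
      rw [← mul_pow, hrdef]; congr 1; field_simp
    have h9 : (n : ℝ) ^ M * ((M + 1 : ℕ) : ℝ) ^ k < (n : ℝ) ^ M * r ^ M :=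
      mul_lt_mul_of_pos_left h6 (by positivity)
    linarith
  obtain ⟨M, hM⟩ := hgood
  refine ⟨B ^ M, ⟨1, h1M M⟩, fun a ha => ?_⟩
  have himg' := himg a ha M
  have hinj : Function.Injective (a * ·) := mul_right_injective a
  have h1 : (B ^ M) \ (B ^ M).image (a * ·) ⊆ (B ^ (M + 1)) \ (B ^ M).image (a * ·) :=
    Finset.sdiff_subset_sdiff (hsub M) (le_refl _)
  have h2 : ((B ^ (M + 1)) \ (B ^ M).image (a * ·)).card
      = (B ^ (M + 1)).card - (B ^ M).card := by
    rw [Finset.card_sdiff_of_subset himg', Finset.card_image_of_injective _ hinj]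
  calc ((B ^ M) \ (B ^ M).image (a * ·)).card * n
      ≤ ((B ^ (M + 1)) \ (B ^ M).image (a * ·)).card * n :=
        Nat.mul_le_mul_right n (Finset.card_le_card h1)
    _ = ((B ^ (M + 1)).card - (B ^ M).card) * n := by rw [h2]
    _ ≤ (B ^ M).card := hM


lemma add_folner {K : Type*} [AddCommGroup K] [DecidableEq K] (A : Finset K) (n : ℕ) :
    ∃ S : Finset K, S.Nonempty ∧ ∀ a ∈ A, (S \ S.image (a + ·)).card * n ≤ S.card := by
  classical
  obtain ⟨Φ, hne, h⟩ := abelian_folner (G := Multiplicative K)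
      (A.image (Multiplicative.ofAdd)) n
  refine ⟨Φ.image (Multiplicative.toAdd), hne.image _, fun a ha => ?_⟩
  have hinj : Function.Injective (Multiplicative.toAdd (α := K)) :=
    Multiplicative.toAdd.injective
  have key := h (Multiplicative.ofAdd a) (Finset.mem_image_of_mem _ ha)
  have himg : (Φ.image (Multiplicative.toAdd)).image (a + ·)
      = (Φ.image (Multiplicative.ofAdd a * ·)).image (Multiplicative.toAdd) := by
    rw [Finset.image_image, Finset.image_image]
    rfl
  have hsd : (Φ.image (Multiplicative.toAdd)) \ (Φ.image (Multiplicative.toAdd)).image (a + ·)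
      = (Φ \ Φ.image (Multiplicative.ofAdd a * ·)).image (Multiplicative.toAdd) := by
    rw [himg, ← Finset.image_sdiff _ _ hinj]
  rw [hsd, Finset.card_image_of_injective _ hinj, Finset.card_image_of_injective _ hinj]
  exact key

lemma mul_folner {K : Type*} [Field K] [DecidableEq K] (A : Finset K) (n : ℕ) :
    ∃ Φ : Finset K, Φ.Nonempty ∧ (∀ w ∈ Φ, w ≠ 0) ∧
      ∀ a ∈ A, a ≠ 0 → (Φ \ Φ.image (a * ·)).card * n ≤ Φ.card := by
  classical
  set A' : Finset Kˣ := (A.filter (· ≠ 0)).attach.image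
    (fun a => Units.mk0 a.1 (by exact (Finset.mem_filter.1 a.2).2)) with hA'
  obtain ⟨Φ', hne, h⟩ := abelian_folner A' n
  have hinj : Function.Injective (Units.val (α := K)) := fun _ _ h => Units.ext h
  refine ⟨Φ'.image Units.val, hne.image _, ?_, fun a ha ha0 => ?_⟩
  · intro w hw
    obtain ⟨u, _, rfl⟩ := Finset.mem_image.1 hw
    exact u.ne_zero
  · have hmem : Units.mk0 a ha0 ∈ A' := by
      rw [hA']
      exact Finset.mem_image.2 ⟨⟨a, Finset.mem_filter.2 ⟨ha, ha0⟩⟩, Finset.mem_attach _ _, by simp⟩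
    have key := h (Units.mk0 a ha0) hmem
    have himg : (Φ'.image Units.val).image (a * ·)
        = (Φ'.image (Units.mk0 a ha0 * ·)).image Units.val := by
      rw [Finset.image_image, Finset.image_image]
      rfl
    have hsd : (Φ'.image Units.val) \ (Φ'.image Units.val).image (a * ·)
        = (Φ' \ Φ'.image (Units.mk0 a ha0 * ·)).image Units.val := by
      rw [himg, ← Finset.image_sdiff _ _ hinj]
    rw [hsd, Finset.card_image_of_injective _ hinj, Finset.card_image_of_injective _ hinj]
    exact key

lemma affine_folner {K : Type*} [Field K] [DecidableEq K] (H : Finset (K × K))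
    (hH : ∀ g ∈ H, g.1 ≠ 0) (n : ℕ) :
    ∃ (P : Finset (K × K)) (B : Finset K), P.Nonempty ∧ (∀ p ∈ P, p.1 ≠ 0) ∧
      ∀ x : K, x ∉ B →
        (P.image (fun p => p.1 * x + p.2)).card = P.card ∧
        ∀ g ∈ H,
          ((P.image fun p => p.1 * x + p.2) \
            (P.image fun p => p.1 * x + p.2).image (fun y => g.1 * y + g.2)).card * n
            ≤ 2 * P.card := by
  classical
  obtain ⟨Φ, hΦne, hΦ0, hΦ⟩ := mul_folner (H.image Prod.fst) n
  set V : Finset K := (H ×ˢ Φ).image (fun q => q.1.2 / q.2) with hV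
  obtain ⟨S₀, hSne, hS⟩ := add_folner V n
  set P : Finset (K × K) := (Φ ×ˢ S₀).image (fun q => (q.1, q.1 * q.2)) with hP
  set B : Finset K :=
    ((Φ ×ˢ S₀) ×ˢ (Φ ×ˢ S₀)).image
      (fun q => (q.2.1 * q.2.2 - q.1.1 * q.1.2) / (q.1.1 - q.2.1)) with hB
  have hPcard : P.card = Φ.card * S₀.card := by
    rw [hP, Finset.card_image_of_injOn, Finset.card_product]
    intro q hq q' hq' he
    simp only [Finset.mem_coe, Finset.mem_product] at hq hq'
    simp only [Prod.mk.injEq] at he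
    obtain ⟨h1, h2⟩ := he
    rw [← h1] at h2
    have : q.2 = q'.2 := mul_left_cancel₀ (hΦ0 _ hq.1) h2
    exact Prod.ext h1 this
  refine ⟨P, B, ?_, ?_, fun x hx => ?_⟩
  · obtain ⟨w, hw⟩ := hΦne
    obtain ⟨s, hs⟩ := hSne
    exact ⟨(w, w * s), Finset.mem_image.2 ⟨(w, s), Finset.mem_product.2 ⟨hw, hs⟩, rfl⟩⟩
  · intro p hp
    obtain ⟨q, hq, rfl⟩ := Finset.mem_image.1 hp
    exact hΦ0 _ (Finset.mem_product.1 hq).1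
  -- rewrite the image set
  have hF : P.image (fun p => p.1 * x + p.2)
      = (Φ ×ˢ S₀).image (fun q => q.1 * x + q.1 * q.2) := by
    rw [hP, Finset.image_image]
    rfl
  have hinj : Set.InjOn (fun q : K × K => q.1 * x + q.1 * q.2) ↑(Φ ×ˢ S₀) := by
    intro q hq q' hq' he
    rw [Finset.mem_coe, Finset.mem_product] at hq hq'
    simp only at he
    by_cases h1 : q.1 = q'.1
    · rw [h1] at he
      have h2 := add_left_cancel he
      exact Prod.ext h1 (mul_left_cancel₀ (hΦ0 _ hq'.1) h2)
    · exfalso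
      apply hx
      rw [hB]
      refine Finset.mem_image.2 ⟨(q, q'), Finset.mem_product.2 ⟨Finset.mem_product.2 ⟨hq.1, hq.2⟩,
        Finset.mem_product.2 ⟨hq'.1, hq'.2⟩⟩, ?_⟩
      have hne : q.1 - q'.1 ≠ 0 := sub_ne_zero.2 h1
      rw [div_eq_iff hne]
      linear_combination -he
  have hcardx : (P.image (fun p => p.1 * x + p.2)).card = P.card := by
    rw [hF, Finset.card_image_of_injOn hinj, Finset.card_product, hPcard]
  refine ⟨hcardx, fun g hg => ?_⟩
  have hu0 : g.1 ≠ 0 := hH g hg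
  set u : K := g.1 with hu
  set v : K := g.2 with hv2
  set F : Finset K := (Φ ×ˢ S₀).image (fun q => q.1 * x + q.1 * q.2) with hFdef
  set gF : Finset K := F.image (fun y => u * y + v) with hgFdef
  rw [hF]
  show (F \ gF).card * n ≤ 2 * P.card
  have hFb : F = Φ.biUnion (fun w => S₀.image (fun s => w * x + w * s)) := by
    ext y
    simp only [hFdef, Finset.mem_image, Finset.mem_biUnion, Finset.mem_product]
    constructor
    · rintro ⟨q, ⟨h1, h2⟩, rfl⟩; exact ⟨q.1, h1, q.2, h2, rfl⟩
    · rintro ⟨w, h1, s, h2, rfl⟩; exact ⟨(w, s), ⟨h1, h2⟩, rfl⟩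
  have hsub2 : F \ gF ⊆ Φ.biUnion (fun w => (S₀.image (fun s => w * x + w * s)) \ gF) := by
    intro y hy
    rw [Finset.mem_sdiff] at hy
    obtain ⟨hyF, hyn⟩ := hy
    rw [hFb, Finset.mem_biUnion] at hyF
    obtain ⟨w, hw, hyw⟩ := hyF
    exact Finset.mem_biUnion.2 ⟨w, hw, Finset.mem_sdiff.2 ⟨hyw, hyn⟩⟩
  have hkey : ∀ w ∈ Φ, ((S₀.image (fun s => w * x + w * s)) \ gF).card * n ≤
      (if w ∈ Φ.image (u * ·) then S₀.card else S₀.card * n) := by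
    intro w hw
    by_cases hcase : w ∈ Φ.image (u * ·)
    · rw [if_pos hcase]
      obtain ⟨w₀, hw₀, rfl⟩ := Finset.mem_image.1 hcase
      have hw0 : (u * w₀ : K) ≠ 0 := mul_ne_zero hu0 (hΦ0 _ hw₀)
      have hsubset : (S₀.image (fun s => (u * w₀) * x + (u * w₀) * s)) \ gF ⊆
          (S₀ \ S₀.image ((v / (u * w₀)) + ·)).image
            (fun s => (u * w₀) * x + (u * w₀) * s) := by
        intro y hy
        rw [Finset.mem_sdiff] at hy
        obtain ⟨hy1, hyn⟩ := hy
        obtain ⟨s, hs, rfl⟩ := Finset.mem_image.1 hy1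
        refine Finset.mem_image.2 ⟨s, Finset.mem_sdiff.2 ⟨hs, fun hcon => hyn ?_⟩, rfl⟩
        obtain ⟨s', hs', hes⟩ := Finset.mem_image.1 hcon
        refine Finset.mem_image.2 ⟨w₀ * x + w₀ * s', ?_, ?_⟩
        · rw [hFdef]
          exact Finset.mem_image.2 ⟨(w₀, s'), Finset.mem_product.2 ⟨hw₀, hs'⟩, rfl⟩
        · rw [← hes]
          field_simp
          rw [mul_add w₀, mul_add w₀, mul_div_cancel₀ v (hΦ0 _ hw₀)]; ring
      have hvw : v / (u * w₀) ∈ V := by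
        rw [hV]
        exact Finset.mem_image.2 ⟨(g, u * w₀), Finset.mem_product.2 ⟨hg, hw⟩, rfl⟩
      calc ((S₀.image (fun s => (u * w₀) * x + (u * w₀) * s)) \ gF).card * n
          ≤ (S₀ \ S₀.image ((v / (u * w₀)) + ·)).card * n :=
            Nat.mul_le_mul_right _ ((Finset.card_le_card hsubset).trans Finset.card_image_le)
        _ ≤ S₀.card := hS _ hvw
    · rw [if_neg hcase]
      exact Nat.mul_le_mul_right _
        ((Finset.card_le_card Finset.sdiff_subset).trans Finset.card_image_le)
  have h1 : (F \ gF).card ≤ ∑ w ∈ Φ, ((S₀.image (fun s => w * x + w * s)) \ gF).card :=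
    (Finset.card_le_card hsub2).trans Finset.card_biUnion_le
  have h2 : (F \ gF).card * n
      ≤ ∑ w ∈ Φ, (if w ∈ Φ.image (u * ·) then S₀.card else S₀.card * n) := by
    calc (F \ gF).card * n
        ≤ (∑ w ∈ Φ, ((S₀.image (fun s => w * x + w * s)) \ gF).card) * n :=
          Nat.mul_le_mul_right _ h1
      _ = ∑ w ∈ Φ, ((S₀.image (fun s => w * x + w * s)) \ gF).card * n := Finset.sum_mul ..
      _ ≤ _ := Finset.sum_le_sum hkey
  have hufst : u ∈ H.image Prod.fst := Finset.mem_image_of_mem _ hg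
  have hΦu : (Φ \ Φ.image (u * ·)).card * n ≤ Φ.card := hΦ u hufst hu0
  have h3 : ∑ w ∈ Φ, (if w ∈ Φ.image (u * ·) then S₀.card else S₀.card * n)
      ≤ Φ.card * S₀.card + Φ.card * S₀.card := by
    rw [Finset.sum_ite, Finset.sum_const, Finset.sum_const, smul_eq_mul, smul_eq_mul]
    have e1 : (Φ.filter (· ∈ Φ.image (u * ·))).card * S₀.card ≤ Φ.card * S₀.card :=
      Nat.mul_le_mul_right _ (Finset.card_le_card (Finset.filter_subset _ _))
    have efil : Φ.filter (fun w => ¬ w ∈ Φ.image (u * ·)) = Φ \ Φ.image (u * ·) :=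
      (Finset.sdiff_eq_filter _ _).symm
    have e2 : (Φ.filter (fun w => ¬ w ∈ Φ.image (u * ·))).card * (S₀.card * n)
        ≤ Φ.card * S₀.card := by
      rw [efil]
      calc (Φ \ Φ.image (u * ·)).card * (S₀.card * n)
          = ((Φ \ Φ.image (u * ·)).card * n) * S₀.card := by ring
        _ ≤ Φ.card * S₀.card := Nat.mul_le_mul_right _ hΦu
    exact Nat.add_le_add e1 e2
  calc (F \ gF).card * n ≤ Φ.card * S₀.card + Φ.card * S₀.card := h2.trans h3
    _ = 2 * P.card := by rw [hPcard]; ring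

lemma exists_good_x {K : Type*} [Field K] [Infinite K] [DecidableEq K] {T : Set K}
    (hT : AffThick T) (P : Finset (K × K)) (hP : ∀ p ∈ P, p.1 ≠ 0) (B : Finset K) :
    ∃ x : K, x ∉ B ∧ ∀ p ∈ P, p.1 * x + p.2 ∈ T := by
  classical
  set m := B.card with hm
  set e := Infinite.natEmbedding K with he
  set C : Finset K := (Finset.range (m + 1)).image e with hC
  have hCcard : C.card = m + 1 := by
    rw [hC, Finset.card_image_of_injective _ e.injective, Finset.card_range]
  set P' : Finset (K × K) := (P ×ˢ C).image (fun q => (q.1.1, q.1.1 * q.2 + q.1.2)) with hP'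
  have hP'0 : ∀ p ∈ P', p.1 ≠ 0 := by
    intro p hp
    obtain ⟨q, hq, rfl⟩ := Finset.mem_image.1 hp
    exact hP q.1 (Finset.mem_product.1 hq).1
  obtain ⟨x₀, hx₀⟩ := hT P' hP'0
  have hnot : ¬ (C.image (x₀ + ·) ⊆ B) := by
    intro hsub
    have h1 := Finset.card_le_card hsub
    rw [Finset.card_image_of_injective _ (add_right_injective x₀), hCcard] at h1
    omega
  obtain ⟨y, hy, hyB⟩ : ∃ y ∈ C.image (x₀ + ·), y ∉ B := by
    by_contra hcon
    push_neg at hcon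
    exact hnot hcon
  obtain ⟨c, hc, rfl⟩ := Finset.mem_image.1 hy
  refine ⟨x₀ + c, hyB, fun p hp => ?_⟩
  have hmem : (p.1, p.1 * c + p.2) ∈ P' :=
    Finset.mem_image.2 ⟨(p, c), Finset.mem_product.2 ⟨hp, hc⟩, rfl⟩
  have h2 := hx₀ _ hmem
  have h3 : p.1 * (x₀ + c) + p.2 = p.1 * x₀ + (p.1 * c + p.2) := by ring
  rw [h3]
  exact h2

lemma ratio_helper {K : Type*} [Field K] [DecidableEq K] (F : ℕ → Finset K)
    (hne : ∀ N, (F N).Nonempty) (φ : ℕ → K → K)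
    (hbound : ∀ᶠ N in Filter.atTop,
      ((F N) \ (F N).image (φ N)).card * (N + 1) ≤ 2 * (F N).card) :
    Filter.Tendsto (fun N => (((F N) ∩ (F N).image (φ N)).card : ℝ) / (F N).card)
      Filter.atTop (nhds 1) := by
  have hpos : ∀ N, (0:ℝ) < ((F N).card : ℝ) := fun N => by exact_mod_cast (hne N).card_pos
  apply tendsto_of_tendsto_of_tendsto_of_le_of_le'
    (g := fun N : ℕ => 1 - 2 / ((N : ℝ) + 1)) (h := fun _ : ℕ => (1:ℝ))
  · have h0 : Filter.Tendsto (fun N : ℕ => 2 / ((N : ℝ) + 1)) Filter.atTop (nhds 0) := by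
      have h2 := tendsto_one_div_add_atTop_nhds_zero_nat.const_mul (2:ℝ)
      simpa [div_eq_mul_inv, mul_comm, mul_assoc, mul_one] using h2
    simpa using (tendsto_const_nhds (x := (1:ℝ))).sub h0
  · exact tendsto_const_nhds
  · filter_upwards [hbound] with N hN
    have hcard := Finset.card_inter_add_card_sdiff (F N) ((F N).image (φ N))
    set a := ((F N) ∩ (F N).image (φ N)).card with ha
    set d := ((F N) \ (F N).image (φ N)).card with hd
    have hNpos : (0:ℝ) < (N : ℝ) + 1 := by positivity
    have hdr : (d : ℝ) * ((N : ℝ) + 1) ≤ 2 * ((F N).card : ℝ) := by exact_mod_cast hN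
    have hsum : (a : ℝ) + (d : ℝ) = ((F N).card : ℝ) := by exact_mod_cast hcard
    rw [le_div_iff₀ (hpos N)]
    have hdle : (d : ℝ) ≤ 2 * ((F N).card : ℝ) / ((N : ℝ) + 1) := by
      rw [le_div_iff₀ hNpos]; exact hdr
    have hexp : (1 - 2 / ((N : ℝ) + 1)) * ((F N).card : ℝ)
        = ((F N).card : ℝ) - 2 * ((F N).card : ℝ) / ((N : ℝ) + 1) := by
      field_simp
    rw [hexp]
    linarith
  · filter_upwards [] with N
    rw [div_le_one (hpos N)]
    have : ((F N) ∩ (F N).image (φ N)).card ≤ (F N).card :=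
      Finset.card_le_card (Finset.inter_subset_left)
    exact_mod_cast this

lemma ncard_inter_image {K : Type*} [DecidableEq K] (F : Finset K) (φ : K → K) :
    ((↑F : Set K) ∩ φ '' ↑F).ncard = (F ∩ F.image φ).card := by
  rw [← Finset.coe_image, ← Finset.coe_inter, Set.ncard_coe_finset]

lemma folner_of_thick {K : Type*} [Field K] [Countable K] [Infinite K] {T : Set K}
    (hT : AffThick T) : ∃ F : ℕ → Finset K, DoubleFolner F ∧ ∀ N, ↑(F N) ⊆ T := by
  classical
  obtain ⟨f, hf⟩ := exists_surjective_nat K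
  set H : ℕ → Finset (K × K) := fun N =>
    ((Finset.range (N + 1)).image (fun j => ((1 : K), f j))) ∪
      (((Finset.range (N + 1)).filter (fun j => f j ≠ 0)).image (fun j => (f j, (0 : K))))
    with hHdef
  have hH0 : ∀ N, ∀ g ∈ H N, g.1 ≠ 0 := by
    intro N g hg
    rcases Finset.mem_union.1 hg with h | h
    · obtain ⟨j, _, rfl⟩ := Finset.mem_image.1 h; exact one_ne_zero
    · obtain ⟨j, hj, rfl⟩ := Finset.mem_image.1 h
      exact (Finset.mem_filter.1 hj).2
  have haff := fun N => affine_folner (H N) (hH0 N) (N + 1)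
  choose P B hPne hP0 hgood using haff
  have hgx := fun N => exists_good_x hT (P N) (hP0 N) (B N)
  choose x hxB hxT using hgx
  set F : ℕ → Finset K := fun N => (P N).image (fun p => p.1 * x N + p.2) with hFdef
  have hne : ∀ N, (F N).Nonempty := fun N => (hPne N).image _
  have hcard : ∀ N, (F N).card = (P N).card := fun N => (hgood N (x N) (hxB N)).1
  have hsubT : ∀ N, ↑(F N) ⊆ T := by
    intro N y hy
    rw [Finset.mem_coe, hFdef] at hy
    obtain ⟨p, hp, rfl⟩ := Finset.mem_image.1 hy
    exact hxT N p hp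
  have hkey : ∀ N, ∀ g ∈ H N,
      ((F N) \ (F N).image (fun y => g.1 * y + g.2)).card * (N + 1) ≤ 2 * (F N).card := by
    intro N g hg
    have h := (hgood N (x N) (hxB N)).2 g hg
    rw [hcard N]
    exact h
  refine ⟨F, ⟨hne, ?_, ?_⟩, hsubT⟩
  · intro u
    obtain ⟨j₀, hj₀⟩ := hf u
    have hmem : ∀ N, j₀ ≤ N → ((1 : K), u) ∈ H N := by
      intro N hN
      exact Finset.mem_union_left _
        (Finset.mem_image.2 ⟨j₀, Finset.mem_range.2 (by omega), by rw [hj₀]⟩)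
    have hb : ∀ᶠ N in Filter.atTop,
        ((F N) \ (F N).image (fun y => y + u)).card * (N + 1) ≤ 2 * (F N).card := by
      filter_upwards [Filter.eventually_ge_atTop j₀] with N hN
      have h2 := hkey N _ (hmem N hN)
      simpa [one_mul] using h2
    have h3 := ratio_helper F hne (fun _ => (fun y => y + u)) hb
    have heq : ∀ N, (((F N : Set K) ∩ ((· + u) '' (F N : Set K))).ncard : ℝ)
        = (((F N) ∩ (F N).image (fun y => y + u)).card : ℝ) := by
      intro N
      rw [ncard_inter_image]
    simpa only [heq] using h3
  · intro u hu
    obtain ⟨j₀, hj₀⟩ := hf u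
    have hmem : ∀ N, j₀ ≤ N → ((u : K), (0 : K)) ∈ H N := by
      intro N hN
      refine Finset.mem_union_right _ (Finset.mem_image.2 ⟨j₀, ?_, by rw [hj₀]⟩)
      refine Finset.mem_filter.2 ⟨Finset.mem_range.2 (by omega), by rw [hj₀]; exact hu⟩
    have hb : ∀ᶠ N in Filter.atTop,
        ((F N) \ (F N).image (fun y => u * y)).card * (N + 1) ≤ 2 * (F N).card := by
      filter_upwards [Filter.eventually_ge_atTop j₀] with N hN
      have h2 := hkey N _ (hmem N hN)
      simpa [add_zero] using h2
    have h3 := ratio_helper F hne (fun _ => (fun y => u * y)) hb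
    have heq : ∀ N, (((F N : Set K) ∩ ((u * ·) '' (F N : Set K))).ncard : ℝ)
        = (((F N) ∩ (F N).image (fun y => u * y)).card : ℝ) := by
      intro N
      rw [ncard_inter_image]
    simpa only [heq] using h3

lemma ncard_inter_set {K : Type*} [DecidableEq K] (S : Set K) (F : Finset K)
    [DecidablePred (· ∈ S)] :
    (S ∩ ↑F).ncard = (F.filter (· ∈ S)).card := by
  rw [← Set.ncard_coe_finset (F.filter (· ∈ S))]
  congr 1
  ext y
  simp [Finset.mem_coe, Finset.mem_filter, and_comm]

lemma affine_ratio {K : Type*} [Field K] [DecidableEq K] {F : ℕ → Finset K}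
    (hF : DoubleFolner F) (u v : K) (hu : u ≠ 0) :
    Filter.Tendsto
      (fun N => (((F N) ∩ (F N).image (fun y => u * y + v)).card : ℝ) / (F N).card)
      Filter.atTop (nhds 1) := by
  obtain ⟨hne, htr, hdil⟩ := hF
  have hpos : ∀ N, (0:ℝ) < ((F N).card : ℝ) := fun N => by exact_mod_cast (hne N).card_pos
  have htr' : Filter.Tendsto
      (fun N => (((F N) ∩ (F N).image (fun y => y + v)).card : ℝ) / (F N).card)
      Filter.atTop (nhds 1) := by
    have heq : ∀ N, (((F N : Set K) ∩ ((· + v) '' (F N : Set K))).ncard : ℝ)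
        = (((F N) ∩ (F N).image (fun y => y + v)).card : ℝ) := fun N => by
      rw [ncard_inter_image]
    simpa only [heq] using htr v
  have hdil' : Filter.Tendsto
      (fun N => (((F N) ∩ (F N).image (fun y => u * y)).card : ℝ) / (F N).card)
      Filter.atTop (nhds 1) := by
    have heq : ∀ N, (((F N : Set K) ∩ ((u * ·) '' (F N : Set K))).ncard : ℝ)
        = (((F N) ∩ (F N).image (fun y => u * y)).card : ℝ) := fun N => by
      rw [ncard_inter_image]
    simpa only [heq] using hdil u hu
  -- pointwise inequality
  have hptw : ∀ N, (((F N) ∩ (F N).image (fun y => y + v)).card : ℝ) / (F N).card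
      + (((F N) ∩ (F N).image (fun y => u * y)).card : ℝ) / (F N).card - 1
      ≤ (((F N) ∩ (F N).image (fun y => u * y + v)).card : ℝ) / (F N).card := by
    intro N
    set G := F N
    have hsub : G \ G.image (fun y => u * y + v) ⊆
        (G \ G.image (fun y => y + v)) ∪ ((G \ G.image (fun y => u * y)).image (fun y => y + v)) := by
      intro y hy
      rw [Finset.mem_sdiff] at hy
      obtain ⟨hyG, hyn⟩ := hy
      by_cases h1 : y ∈ G.image (fun y => y + v)
      · obtain ⟨z, hz, rfl⟩ := Finset.mem_image.1 h1
        refine Finset.mem_union_right _ (Finset.mem_image.2 ⟨z, Finset.mem_sdiff.2 ⟨hz, ?_⟩, rfl⟩)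
        intro hcon
        obtain ⟨w, hw, rfl⟩ := Finset.mem_image.1 hcon
        exact hyn (Finset.mem_image.2 ⟨w, hw, rfl⟩)
      · exact Finset.mem_union_left _ (Finset.mem_sdiff.2 ⟨hyG, h1⟩)
    have hc1 : (G \ G.image (fun y => u * y + v)).card ≤
        (G \ G.image (fun y => y + v)).card + (G \ G.image (fun y => u * y)).card := by
      calc (G \ G.image (fun y => u * y + v)).card
          ≤ ((G \ G.image (fun y => y + v)) ∪
              ((G \ G.image (fun y => u * y)).image (fun y => y + v))).card :=
            Finset.card_le_card hsub
        _ ≤ (G \ G.image (fun y => y + v)).card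
            + ((G \ G.image (fun y => u * y)).image (fun y => y + v)).card :=
            Finset.card_union_le _ _
        _ ≤ _ := by
            exact Nat.add_le_add_left Finset.card_image_le _
    have e1 := Finset.card_inter_add_card_sdiff G (G.image (fun y => u * y + v))
    have e2 := Finset.card_inter_add_card_sdiff G (G.image (fun y => y + v))
    have e3 := Finset.card_inter_add_card_sdiff G (G.image (fun y => u * y))
    have hr : ((G ∩ G.image (fun y => y + v)).card : ℝ)
        + ((G ∩ G.image (fun y => u * y)).card : ℝ) - (G.card : ℝ)
        ≤ ((G ∩ G.image (fun y => u * y + v)).card : ℝ) := by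
      have c1 : ((G \ G.image (fun y => u * y + v)).card : ℝ) ≤
          ((G \ G.image (fun y => y + v)).card : ℝ)
          + ((G \ G.image (fun y => u * y)).card : ℝ) := by exact_mod_cast hc1
      have r1 : ((G ∩ G.image (fun y => u * y + v)).card : ℝ)
          + ((G \ G.image (fun y => u * y + v)).card : ℝ) = (G.card : ℝ) := by exact_mod_cast e1
      have r2 : ((G ∩ G.image (fun y => y + v)).card : ℝ)
          + ((G \ G.image (fun y => y + v)).card : ℝ) = (G.card : ℝ) := by exact_mod_cast e2
      have r3 : ((G ∩ G.image (fun y => u * y)).card : ℝ)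
          + ((G \ G.image (fun y => u * y)).card : ℝ) = (G.card : ℝ) := by exact_mod_cast e3
      linarith
    rw [← add_div]
    have hc0 : ((G.card : ℝ)) ≠ 0 := ne_of_gt (hpos N)
    have h2 : (((G ∩ G.image (fun y => y + v)).card : ℝ)
        + ((G ∩ G.image (fun y => u * y)).card : ℝ)) / (G.card : ℝ) - 1
        = (((G ∩ G.image (fun y => y + v)).card : ℝ)
          + ((G ∩ G.image (fun y => u * y)).card : ℝ) - (G.card : ℝ)) / (G.card : ℝ) := by
      field_simp
    rw [h2, div_le_div_iff_of_pos_right (hpos N)]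
    exact hr
  have hup : ∀ N, (((F N) ∩ (F N).image (fun y => u * y + v)).card : ℝ) / (F N).card ≤ 1 := by
    intro N
    rw [div_le_one (hpos N)]
    exact_mod_cast Finset.card_le_card (Finset.inter_subset_left)
  have hlow : Filter.Tendsto
      (fun N => (((F N) ∩ (F N).image (fun y => y + v)).card : ℝ) / (F N).card
        + (((F N) ∩ (F N).image (fun y => u * y)).card : ℝ) / (F N).card - 1)
      Filter.atTop (nhds 1) := by
    have := (htr'.add hdil').sub (tendsto_const_nhds (x := (1:ℝ)))
    simpa using this
  exact tendsto_of_tendsto_of_tendsto_of_le_of_le hlow tendsto_const_nhds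
    (fun N => by
      have h := hptw N
      calc (fun N => (((F N) ∩ (F N).image (fun y => y + v)).card : ℝ) / (F N).card
        + (((F N) ∩ (F N).image (fun y => u * y)).card : ℝ) / (F N).card - 1) N ≤ _ := h)
    hup

lemma affthick_of_density {K : Type*} [Field K] {F : ℕ → Finset K}
    (hF : DoubleFolner F) {T : Set K} (h1 : lowerDensity F T = 1) : AffThick T := by
  classical
  intro G hG
  rcases G.eq_empty_or_nonempty with rfl | hGne
  · exact ⟨0, by simp⟩
  set k : ℕ := G.card with hk
  have hkpos : 0 < k := Finset.card_pos.2 hGne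
  set ε : ℝ := 1 / (2 * k + 1) with hε
  have hεpos : 0 < ε := by positivity
  have hne := hF.1
  have hpos : ∀ N, (0:ℝ) < ((F N).card : ℝ) := fun N => by exact_mod_cast (hne N).card_pos
  have hTd : ∀ᶠ N in Filter.atTop,
      (1 - ε) * ((F N).card : ℝ) < (((F N).filter (· ∈ T)).card : ℝ) := by
    have hlt : (1 - ε : ℝ) < lowerDensity F T := by rw [h1]; linarith
    have hcb : Filter.IsBoundedUnder (· ≥ ·) Filter.atTop
        (fun N => ((T ∩ (F N : Set K)).ncard : ℝ) / (F N).card) :=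
      Filter.isBoundedUnder_of ⟨0, fun N => by positivity⟩
    filter_upwards [Filter.eventually_lt_of_lt_liminf hlt hcb] with N hN
    have hconv : ((T ∩ (F N : Set K)).ncard : ℝ) = (((F N).filter (· ∈ T)).card : ℝ) := by
      rw [ncard_inter_set]
    rw [hconv] at hN
    exact (lt_div_iff₀ (hpos N)).1 hN
  have hGd : ∀ᶠ N in Filter.atTop, ∀ g ∈ G,
      (1 - ε) * ((F N).card : ℝ)
        < (((F N) ∩ (F N).image (fun y => g.1 * y + g.2)).card : ℝ) := by
    rw [Filter.eventually_all_finset]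
    intro g hg
    have hten := affine_ratio hF g.1 g.2 (hG g hg)
    filter_upwards [hten.eventually (lt_mem_nhds (show (1:ℝ) - ε < 1 by linarith))] with N hN
    exact (lt_div_iff₀ (hpos N)).1 hN
  obtain ⟨N, hN1, hN2⟩ := (hTd.and hGd).exists
  set bad : K × K → Finset K := fun g => (F N).filter (fun y => g.1 * y + g.2 ∉ T) with hbad
  have hbadcard : ∀ g ∈ G, ((bad g).card : ℝ) < 2 * ε * ((F N).card : ℝ) := by
    intro g hg
    have hg1 : g.1 ≠ 0 := hG g hg
    have hinj : Function.Injective (fun y => g.1 * y + g.2) := by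
      intro a b h
      simp only at h
      exact mul_left_cancel₀ hg1 (add_right_cancel h)
    have hsub : (bad g).image (fun y => g.1 * y + g.2) ⊆
        (((F N).image (fun y => g.1 * y + g.2)) \ (F N)) ∪ ((F N).filter (· ∉ T)) := by
      intro z hz
      obtain ⟨y, hy, rfl⟩ := Finset.mem_image.1 hz
      rw [hbad, Finset.mem_filter] at hy
      by_cases hzF : g.1 * y + g.2 ∈ F N
      · exact Finset.mem_union_right _ (Finset.mem_filter.2 ⟨hzF, hy.2⟩)
      · refine Finset.mem_union_left _ (Finset.mem_sdiff.2 ⟨?_, hzF⟩)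
        exact Finset.mem_image_of_mem _ hy.1
    have n4 : (bad g).card ≤ (((F N).image (fun y => g.1 * y + g.2)) \ (F N)).card
        + ((F N).filter (· ∉ T)).card := by
      calc (bad g).card = ((bad g).image (fun y => g.1 * y + g.2)).card :=
            (Finset.card_image_of_injective _ hinj).symm
        _ ≤ _ := (Finset.card_le_card hsub).trans (Finset.card_union_le _ _)
    have n1 := Finset.card_sdiff_add_card_inter
      ((F N).image (fun y => g.1 * y + g.2)) (F N)
    have n2 : ((F N).image (fun y => g.1 * y + g.2)).card = (F N).card :=
      Finset.card_image_of_injective _ hinj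
    have n3 := Finset.card_filter_add_card_filter_not
      (s := F N) (p := (· ∈ T))
    have ncomm : ((F N).image (fun y => g.1 * y + g.2)) ∩ (F N)
        = (F N) ∩ ((F N).image (fun y => g.1 * y + g.2)) := Finset.inter_comm _ _
    rw [ncomm, n2] at n1
    have c1 : ((bad g).card : ℝ) ≤
        ((((F N).image (fun y => g.1 * y + g.2)) \ (F N)).card : ℝ)
        + (((F N).filter (· ∉ T)).card : ℝ) := by exact_mod_cast n4
    have c2 : ((((F N).image (fun y => g.1 * y + g.2)) \ (F N)).card : ℝ)
        + (((F N) ∩ ((F N).image (fun y => g.1 * y + g.2))).card : ℝ)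
        = ((F N).card : ℝ) := by exact_mod_cast n1
    have c3 : (((F N).filter (· ∈ T)).card : ℝ) + (((F N).filter (· ∉ T)).card : ℝ)
        = ((F N).card : ℝ) := by exact_mod_cast n3
    have hb1 := hN2 g hg
    linarith [hN1]
  -- union bound
  set U : Finset K := G.biUnion bad with hU
  have hUsub : U ⊆ F N := by
    intro y hy
    obtain ⟨g, _, hyg⟩ := Finset.mem_biUnion.1 hy
    exact (Finset.mem_filter.1 hyg).1
  have hUcard : ((U.card : ℝ)) < ((F N).card : ℝ) := by
    have hle : (U.card : ℝ) ≤ ∑ g ∈ G, ((bad g).card : ℝ) := by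
      have := Finset.card_biUnion_le (s := G) (t := bad)
      calc (U.card : ℝ) ≤ ((∑ g ∈ G, (bad g).card : ℕ) : ℝ) := by exact_mod_cast this
        _ = ∑ g ∈ G, ((bad g).card : ℝ) := by push_cast; rfl
    have hlt : ∑ g ∈ G, ((bad g).card : ℝ) < ∑ _g ∈ G, 2 * ε * ((F N).card : ℝ) :=
      Finset.sum_lt_sum_of_nonempty hGne hbadcard
    have hsum : ∑ _g ∈ G, 2 * ε * ((F N).card : ℝ) = (k : ℝ) * (2 * ε * ((F N).card : ℝ)) := by
      rw [Finset.sum_const, hk, nsmul_eq_mul]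
    have h2k : (k : ℝ) * (2 * ε) < 1 := by
      rw [hε]
      rw [show (k:ℝ) * (2 * (1 / (2 * (k:ℝ) + 1))) = (2 * k) / (2 * (k:ℝ) + 1) by ring]
      rw [div_lt_one (by positivity)]
      linarith
    have := hpos N
    nlinarith
  have hUlt : U.card < (F N).card := by exact_mod_cast hUcard
  have hsd : (F N \ U).Nonempty := by
    rw [← Finset.card_pos, Finset.card_sdiff_of_subset hUsub]
    omega
  obtain ⟨x, hx⟩ := hsd
  rw [Finset.mem_sdiff] at hx
  refine ⟨x, fun g hg => ?_⟩
  by_contra hcon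
  exact hx.2 (Finset.mem_biUnion.2 ⟨g, hg, Finset.mem_filter.2 ⟨hx.1, hcon⟩⟩)

lemma upperDensity_pos_of_syndetic {K : Type*} [Field K] {F : ℕ → Finset K}
    (hF : DoubleFolner F) {S : Set K} (hS : AffSyndetic S) : 0 < upperDensity F S := by
  classical
  obtain ⟨G, hG0, hGcov⟩ := hS
  have hGne : G.Nonempty := by
    obtain ⟨g, hg, _⟩ := hGcov 0
    exact ⟨g, hg⟩
  set k : ℕ := G.card with hk
  have hkpos : 0 < k := Finset.card_pos.2 hGne
  set ε : ℝ := 1 / (2 * k) with hε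
  have hεpos : 0 < ε := by positivity
  have hne := hF.1
  have hpos : ∀ N, (0:ℝ) < ((F N).card : ℝ) := fun N => by exact_mod_cast (hne N).card_pos
  have hcover : ∀ N, (F N) ⊆ G.biUnion (fun g => (F N).filter (fun y => g.1 * y + g.2 ∈ S)) := by
    intro N y hy
    obtain ⟨g, hg, hgy⟩ := hGcov y
    exact Finset.mem_biUnion.2 ⟨g, hg, Finset.mem_filter.2 ⟨hy, hgy⟩⟩
  have hGd : ∀ᶠ N in Filter.atTop, ∀ g ∈ G,
      (1 - ε) * ((F N).card : ℝ)
        < (((F N) ∩ (F N).image (fun y => g.1 * y + g.2)).card : ℝ) := by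
    rw [Filter.eventually_all_finset]
    intro g hg
    have hten := affine_ratio hF g.1 g.2 (hG0 g hg)
    filter_upwards [hten.eventually (lt_mem_nhds (show (1:ℝ) - ε < 1 by linarith))] with N hN
    exact (lt_div_iff₀ (hpos N)).1 hN
  have hEv : ∀ᶠ N in Filter.atTop,
      1 / (2 * (k : ℝ)) ≤ (((F N).filter (· ∈ S)).card : ℝ) / ((F N).card : ℝ) := by
    filter_upwards [hGd] with N hN
    have hsumN : (F N).card ≤ ∑ g ∈ G, ((F N).filter (fun y => g.1 * y + g.2 ∈ S)).card :=
      (Finset.card_le_card (hcover N)).trans Finset.card_biUnion_le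
    have hper : ∀ g ∈ G, ((((F N).filter (fun y => g.1 * y + g.2 ∈ S)).card : ℝ))
        ≤ (((F N).filter (· ∈ S)).card : ℝ) + ε * ((F N).card : ℝ) := by
      intro g hg
      have hg1 : g.1 ≠ 0 := hG0 g hg
      have hinj : Function.Injective (fun y => g.1 * y + g.2) := by
        intro a b h
        simp only at h
        exact mul_left_cancel₀ hg1 (add_right_cancel h)
      have hsub : ((F N).filter (fun y => g.1 * y + g.2 ∈ S)).image (fun y => g.1 * y + g.2) ⊆
          ((F N).filter (· ∈ S)) ∪ (((F N).image (fun y => g.1 * y + g.2)) \ (F N)) := by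
        intro z hz
        obtain ⟨y, hy, rfl⟩ := Finset.mem_image.1 hz
        rw [Finset.mem_filter] at hy
        by_cases hzF : g.1 * y + g.2 ∈ F N
        · exact Finset.mem_union_left _ (Finset.mem_filter.2 ⟨hzF, hy.2⟩)
        · exact Finset.mem_union_right _
            (Finset.mem_sdiff.2 ⟨Finset.mem_image_of_mem _ hy.1, hzF⟩)
      have n4 : ((F N).filter (fun y => g.1 * y + g.2 ∈ S)).card
          ≤ ((F N).filter (· ∈ S)).card
            + (((F N).image (fun y => g.1 * y + g.2)) \ (F N)).card := by
        calc ((F N).filter (fun y => g.1 * y + g.2 ∈ S)).card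
            = (((F N).filter (fun y => g.1 * y + g.2 ∈ S)).image (fun y => g.1 * y + g.2)).card :=
              (Finset.card_image_of_injective _ hinj).symm
          _ ≤ _ := (Finset.card_le_card hsub).trans (Finset.card_union_le _ _)
      have n1 := Finset.card_sdiff_add_card_inter
        ((F N).image (fun y => g.1 * y + g.2)) (F N)
      have n2 : ((F N).image (fun y => g.1 * y + g.2)).card = (F N).card :=
        Finset.card_image_of_injective _ hinj
      have ncomm : ((F N).image (fun y => g.1 * y + g.2)) ∩ (F N)
          = (F N) ∩ ((F N).image (fun y => g.1 * y + g.2)) := Finset.inter_comm _ _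
      rw [ncomm, n2] at n1
      have c1 : ((((F N).filter (fun y => g.1 * y + g.2 ∈ S)).card : ℝ))
          ≤ ((((F N).filter (· ∈ S)).card : ℝ))
            + (((((F N).image (fun y => g.1 * y + g.2)) \ (F N)).card : ℝ)) := by
        exact_mod_cast n4
      have c2 : (((((F N).image (fun y => g.1 * y + g.2)) \ (F N)).card : ℝ))
          + ((((F N) ∩ ((F N).image (fun y => g.1 * y + g.2))).card : ℝ))
          = ((F N).card : ℝ) := by exact_mod_cast n1
      have hb1 := hN g hg
      linarith
    have hsumR : ((F N).card : ℝ)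
        ≤ ∑ g ∈ G, ((((F N).filter (fun y => g.1 * y + g.2 ∈ S)).card : ℝ)) := by
      calc ((F N).card : ℝ)
          ≤ ((∑ g ∈ G, ((F N).filter (fun y => g.1 * y + g.2 ∈ S)).card : ℕ) : ℝ) := by
            exact_mod_cast hsumN
        _ = _ := by push_cast; rfl
    have hsum2 : ∑ g ∈ G, ((((F N).filter (fun y => g.1 * y + g.2 ∈ S)).card : ℝ))
        ≤ (k : ℝ) * ((((F N).filter (· ∈ S)).card : ℝ) + ε * ((F N).card : ℝ)) := by
      calc _ ≤ ∑ _g ∈ G, ((((F N).filter (· ∈ S)).card : ℝ) + ε * ((F N).card : ℝ)) :=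
            Finset.sum_le_sum hper
        _ = _ := by rw [Finset.sum_const, hk, nsmul_eq_mul]
    have hkε : (k : ℝ) * ε = 1 / 2 := by
      rw [hε]
      field_simp
    rw [le_div_iff₀ (hpos N)]
    have hkR : (0:ℝ) < (k : ℝ) := by exact_mod_cast hkpos
    have hexp : (k : ℝ) * ((((F N).filter (· ∈ S)).card : ℝ) + ε * ((F N).card : ℝ))
        = (k : ℝ) * (((F N).filter (· ∈ S)).card : ℝ) + (1/2) * ((F N).card : ℝ) := by
      rw [mul_add, ← mul_assoc, hkε]
    have h5 : (1/2) * ((F N).card : ℝ) ≤ (k : ℝ) * (((F N).filter (· ∈ S)).card : ℝ) := by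
      linarith
    rw [div_mul_eq_mul_div, one_mul, div_le_iff₀ (by positivity : (0:ℝ) < 2 * (k:ℝ))]
    linarith
  -- conclude via limsup
  have hbdd : Filter.IsBoundedUnder (· ≤ ·) Filter.atTop
      (fun N => ((S ∩ (F N : Set K)).ncard : ℝ) / (F N).card) := by
    refine Filter.isBoundedUnder_of ⟨1, fun N => ?_⟩
    rw [div_le_one (hpos N)]
    have : (S ∩ (F N : Set K)).ncard ≤ (F N).card := by
      rw [← Set.ncard_coe_finset (F N)]
      exact Set.ncard_le_ncard Set.inter_subset_right (Finset.finite_toSet _)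
    exact_mod_cast this
  have hfreq : ∃ᶠ N in Filter.atTop,
      1 / (2 * (k : ℝ)) ≤ ((S ∩ (F N : Set K)).ncard : ℝ) / (F N).card := by
    apply Filter.Eventually.frequently
    filter_upwards [hEv] with N hN
    have hconv : ((S ∩ (F N : Set K)).ncard : ℝ) = (((F N).filter (· ∈ S)).card : ℝ) := by
      rw [ncard_inter_set]
    rw [hconv]
    exact hN
  have hle := Filter.le_limsup_of_frequently_le hfreq hbdd
  have : (0:ℝ) < 1 / (2 * (k : ℝ)) := by positivity
  calc (0:ℝ) < 1 / (2 * (k : ℝ)) := this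
    _ ≤ _ := hle

/-- In an infinite countable field `K`: (i) `S ⊆ K` is affinely syndetic iff
its upper density is positive with respect to every double Følner sequence; (ii) `T ⊆ K` is
affinely thick iff there is a double Følner sequence with respect to which its lower density
is `1`. -/
theorem stmt12 (K : Type*) [Field K] [Countable K] [Infinite K] :
    (∀ S : Set K, AffSyndetic S ↔
      ∀ F : ℕ → Finset K, DoubleFolner F → 0 < upperDensity F S) ∧
    (∀ T : Set K, AffThick T ↔
      ∃ F : ℕ → Finset K, DoubleFolner F ∧ lowerDensity F T = 1) := by
  classical
  constructor
  · intro S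
    constructor
    · intro hS F hF
      exact upperDensity_pos_of_syndetic hF hS
    · intro h
      by_contra hS
      have hthick : AffThick Sᶜ := by
        intro G hG
        by_contra hcon
        push_neg at hcon
        apply hS
        refine ⟨G, hG, fun x => ?_⟩
        obtain ⟨g, hg, hgx⟩ := hcon x
        exact ⟨g, hg, by simpa using hgx⟩
      obtain ⟨F, hF, hsub⟩ := folner_of_thick hthick
      have hzero : ∀ N, ((S ∩ (F N : Set K)).ncard : ℝ) = 0 := by
        intro N
        have he : S ∩ (F N : Set K) = ∅ := by
          ext y
          simp only [Set.mem_inter_iff, Set.mem_empty_iff_false, iff_false, not_and]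
          intro hyS hyF
          exact (hsub N hyF) hyS
        rw [he]
        simp
      have hD : upperDensity F S = 0 := by
        unfold upperDensity
        have he2 : (fun N => ((S ∩ (F N : Set K)).ncard : ℝ) / (F N).card)
            = fun _ => (0:ℝ) := by
          funext N
          rw [hzero N, zero_div]
        rw [he2, Filter.limsup_const]
      have hpos := h F hF
      rw [hD] at hpos
      exact lt_irrefl 0 hpos
  · intro T
    constructor
    · intro hT
      obtain ⟨F, hF, hsub⟩ := folner_of_thick hT
      refine ⟨F, hF, ?_⟩
      have hone : ∀ N, ((T ∩ (F N : Set K)).ncard : ℝ) / (F N).card = 1 := by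
        intro N
        have he : T ∩ (F N : Set K) = (F N : Set K) :=
          Set.inter_eq_self_of_subset_right (hsub N)
        have hc : ((F N).card : ℝ) ≠ 0 := by exact_mod_cast (hF.1 N).card_pos.ne'
        rw [he, Set.ncard_coe_finset]
        exact div_self hc
      unfold lowerDensity
      rw [funext hone, Filter.liminf_const]
    · rintro ⟨F, hF, h1⟩
      exact affthick_of_density hF h1
end

section
/- Let R be a LID, let H be a complex Hilbert space, and let (A_v)_{v∈R}, (M_u)_{u∈R∖{0}} be an isometric anti-representation of the affine semigroup of R on H. Then the orthogonal projections V_A and V_M commute: V_A(V_M φ) = V_M(V_A φ) for every φ ∈ H. -/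
/-- A vector is additively compact when its orbit under the additive part of the
anti-representation is precompact in the norm topology. -/
def addOrbitCompact {R H : Type*} [NormedAddCommGroup H] [InnerProductSpace ℂ H]
    (A : R → H →ₗᵢ[ℂ] H) (φ : H) : Prop :=
  IsCompact (closure (Set.range fun v : R => A v φ))

/-- A vector is multiplicatively compact when its orbit under the multiplicative part
(over nonzero indices) of the anti-representation is precompact in the norm topology. -/
def mulOrbitCompact {R H : Type*} [Zero R] [NormedAddCommGroup H] [InnerProductSpace ℂ H]
    (M : R → H →ₗᵢ[ℂ] H) (φ : H) : Prop :=
  IsCompact (closure (Set.range fun u : {u : R // u ≠ (0 : R)} => M u.1 φ))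

/-- For an isometric anti-representation of the affine semigroup of a LID `R`
on a complex Hilbert space `H`, the orthogonal projections `V_A` (onto the additively compact
vectors) and `V_M` (onto the multiplicatively compact vectors) commute. -/
theorem stmt14 {R : Type*} [CommRing R] [IsDomain R] [Countable R] [Infinite R]
    (hLID : IsLID R)
    {H : Type*} [NormedAddCommGroup H] [InnerProductSpace ℂ H] [CompleteSpace H]
    (A M : R → H →ₗᵢ[ℂ] H)
    (hAadd : ∀ (v w : R) (φ : H), A v (A w φ) = A (v + w) φ)
    (hMmul : ∀ (u w : R), u ≠ 0 → w ≠ 0 → ∀ φ : H, M u (M w φ) = M (u * w) φ)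
    (hAM : ∀ (v u : R), u ≠ 0 → ∀ φ : H, A v (M u φ) = M u (A (v * u) φ))
    (VA VM : H →L[ℂ] H)
    (hVAmem : ∀ φ : H, addOrbitCompact A (VA φ))
    (hVAorth : ∀ φ ψ : H, addOrbitCompact A ψ → (inner ℂ (φ - VA φ) ψ : ℂ) = 0)
    (hVMmem : ∀ φ : H, mulOrbitCompact M (VM φ))
    (hVMorth : ∀ φ ψ : H, mulOrbitCompact M ψ → (inner ℂ (φ - VM φ) ψ : ℂ) = 0)
    (φ : H) :
    VA (VM φ) = VM (VA φ) := by
  classical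
  -- `A 0` is the identity, and each `A v` has two-sided inverse `A (-v)`.
  have hA0 : ∀ x : H, A 0 x = x := by
    intro x
    have h := hAadd 0 0 x
    rw [add_zero] at h
    exact (A 0).injective h
  have hAinv : ∀ (v : R) (x : H), A v (A (-v) x) = x := by
    intro v x
    rw [hAadd]
    simp [hA0]
  -- precompactness of the orbit is equivalent to total boundedness of the orbit
  have hcomp : ∀ s : Set H, TotallyBounded s → IsCompact (closure s) := fun s hs =>
    isCompact_iff_totallyBounded_isComplete.2 ⟨hs.closure, isClosed_closure.isComplete⟩
  have htbA : ∀ {x : H}, addOrbitCompact A x →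
      TotallyBounded (Set.range fun v : R => A v x) :=
    fun h => TotallyBounded.subset subset_closure h.totallyBounded
  have htbM : ∀ {x : H}, mulOrbitCompact M x →
      TotallyBounded (Set.range fun u : {u : R // u ≠ (0 : R)} => M u.1 x) :=
    fun h => TotallyBounded.subset subset_closure h.totallyBounded
  have haddC : ∀ {x : H}, TotallyBounded (Set.range fun v : R => A v x) →
      addOrbitCompact A x := fun h => hcomp _ h
  have hmulC : ∀ {x : H},
      TotallyBounded (Set.range fun u : {u : R // u ≠ (0 : R)} => M u.1 x) →
      mulOrbitCompact M x := fun h => hcomp _ h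
  -- closure under differences
  have hAsub : ∀ x y : H, addOrbitCompact A x → addOrbitCompact A y →
      addOrbitCompact A (x - y) := by
    intro x y hx hy
    have hK : IsCompact ((fun p : H × H => p.1 - p.2) ''
        ((closure (Set.range fun v : R => A v x)) ×ˢ
          (closure (Set.range fun v : R => A v y)))) :=
      (hx.prod hy).image (continuous_fst.sub continuous_snd)
    have hsub : (Set.range fun v : R => A v (x - y)) ⊆
        (fun p : H × H => p.1 - p.2) ''
          ((closure (Set.range fun v : R => A v x)) ×ˢ
            (closure (Set.range fun v : R => A v y))) := by
      rintro _ ⟨v, rfl⟩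
      exact ⟨(A v x, A v y), ⟨subset_closure ⟨v, rfl⟩, subset_closure ⟨v, rfl⟩⟩,
        (map_sub (A v) x y).symm⟩
    exact hK.of_isClosed_subset isClosed_closure (closure_minimal hsub hK.isClosed)
  have hMsub : ∀ x y : H, mulOrbitCompact M x → mulOrbitCompact M y →
      mulOrbitCompact M (x - y) := by
    intro x y hx hy
    have hK : IsCompact ((fun p : H × H => p.1 - p.2) ''
        ((closure (Set.range fun u : {u : R // u ≠ (0 : R)} => M u.1 x)) ×ˢ
          (closure (Set.range fun u : {u : R // u ≠ (0 : R)} => M u.1 y)))) :=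
      (hx.prod hy).image (continuous_fst.sub continuous_snd)
    have hsub : (Set.range fun u : {u : R // u ≠ (0 : R)} => M u.1 (x - y)) ⊆
        (fun p : H × H => p.1 - p.2) ''
          ((closure (Set.range fun u : {u : R // u ≠ (0 : R)} => M u.1 x)) ×ˢ
            (closure (Set.range fun u : {u : R // u ≠ (0 : R)} => M u.1 y))) := by
      rintro _ ⟨u, rfl⟩
      exact ⟨(M u.1 x, M u.1 y), ⟨subset_closure ⟨u, rfl⟩, subset_closure ⟨u, rfl⟩⟩,
        (map_sub (M u.1) x y).symm⟩
    exact hK.of_isClosed_subset isClosed_closure (closure_minimal hsub hK.isClosed)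
  -- uniqueness of the orthogonal projections
  have uniqA : ∀ x y : H, addOrbitCompact A y →
      (∀ ψ : H, addOrbitCompact A ψ → (inner ℂ (x - y) ψ : ℂ) = 0) → VA x = y := by
    intro x y hy horth
    have hd : addOrbitCompact A (VA x - y) := hAsub _ _ (hVAmem x) hy
    have h1 : (inner ℂ (x - y) (VA x - y) : ℂ) = 0 := horth _ hd
    have h2 : (inner ℂ (x - VA x) (VA x - y) : ℂ) = 0 := hVAorth x _ hd
    have h3 : (inner ℂ (VA x - y) (VA x - y) : ℂ) = 0 := by
      have e : VA x - y = (x - y) - (x - VA x) := by abel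
      nth_rewrite 1 [e]
      rw [inner_sub_left, h1, h2, sub_zero]
    exact sub_eq_zero.1 (inner_self_eq_zero.1 h3)
  have uniqM : ∀ x y : H, mulOrbitCompact M y →
      (∀ ψ : H, mulOrbitCompact M ψ → (inner ℂ (x - y) ψ : ℂ) = 0) → VM x = y := by
    intro x y hy horth
    have hd : mulOrbitCompact M (VM x - y) := hMsub _ _ (hVMmem x) hy
    have h1 : (inner ℂ (x - y) (VM x - y) : ℂ) = 0 := horth _ hd
    have h2 : (inner ℂ (x - VM x) (VM x - y) : ℂ) = 0 := hVMorth x _ hd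
    have h3 : (inner ℂ (VM x - y) (VM x - y) : ℂ) = 0 := by
      have e : VM x - y = (x - y) - (x - VM x) := by abel
      nth_rewrite 1 [e]
      rw [inner_sub_left, h1, h2, sub_zero]
    exact sub_eq_zero.1 (inner_self_eq_zero.1 h3)
  -- `M u` preserves additively compact vectors
  have hMKA : ∀ (u : R), u ≠ 0 → ∀ x : H, addOrbitCompact A x →
      addOrbitCompact A (M u x) := by
    intro u hu x hx
    apply haddC
    have hsub : (Set.range fun v : R => A v (M u x)) ⊆
        (M u) '' (Set.range fun v : R => A v x) := by
      rintro _ ⟨v, rfl⟩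
      exact ⟨A (v * u) x, ⟨v * u, rfl⟩, (hAM v u hu x).symm⟩
    exact TotallyBounded.subset hsub ((htbA hx).image (M u).isometry.uniformContinuous)
  -- key orthogonality: `M u` preserves the orthogonal complement of the additively
  -- compact vectors.  This is where the LID property enters.
  have key6 : ∀ (u : R), u ≠ 0 → ∀ x : H,
      (∀ ψ : H, addOrbitCompact A ψ → (inner ℂ x ψ : ℂ) = 0) →
      ∀ ψ : H, addOrbitCompact A ψ → (inner ℂ (M u x) ψ : ℂ) = 0 := by
    intro u hu x hx ψ hψ
    set W : Submodule ℂ H := LinearMap.range (M u).toLinearMap with hWdef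
    have hWmem : ∀ z : H, M u z ∈ W := fun z => ⟨z, rfl⟩
    have hWclosed : IsClosed (W : Set H) := by
      have h1 : (W : Set H) = Set.range (M u) := by
        ext z
        simp only [hWdef, SetLike.mem_coe, LinearMap.mem_range, Set.mem_range]
        rfl
      rw [h1]
      exact ((M u).isometry.isClosedEmbedding).isClosed_range
    haveI : CompleteSpace W := hWclosed.completeSpace_coe
    -- `W` is invariant under all `A v`
    have hWA : ∀ (v : R) (w : H), w ∈ W → A v w ∈ W := by
      intro v w hw
      obtain ⟨z, hz⟩ := LinearMap.mem_range.1 hw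
      have hz' : M u z = w := hz
      rw [← hz', hAM v u hu z]
      exact hWmem _
    -- vectors orthogonal to `W` stay orthogonal under all `A v`
    have hperpA : ∀ (v : R) (z : H), (∀ w ∈ W, (inner ℂ z w : ℂ) = 0) →
        ∀ w ∈ W, (inner ℂ (A v z) w : ℂ) = 0 := by
      intro v z hz w hw
      have h1 : w = A v (A (-v) w) := (hAinv v w).symm
      rw [h1, (A v).inner_map_map]
      exact hz _ (hWA (-v) w hw)
    -- the orthogonal projection onto `W` commutes with all `A v`
    have hPA : ∀ (v : R) (y : H),
        (↑(W.orthogonalProjectionOnto (A v y)) : H) = A v ↑(W.orthogonalProjectionOnto y) := by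
      intro v y
      apply Submodule.eq_starProjection_of_mem_of_inner_eq_zero
      · exact hWA v _ (W.orthogonalProjectionOnto y).2
      · intro w hw
        have hsub : A v y - A v ↑(W.orthogonalProjectionOnto y)
            = A v (y - ↑(W.orthogonalProjectionOnto y)) := (map_sub (A v) _ _).symm
        rw [hsub]
        exact hperpA v _ (fun w' hw' => Submodule.starProjection_inner_eq_zero y w' hw') w hw
    -- the projection of an additively compact vector is additively compact
    have hPψ : addOrbitCompact A (↑(W.orthogonalProjectionOnto ψ) : H) := by
      apply haddC
      set T : H →L[ℂ] H := W.subtypeL.comp (W.orthogonalProjectionOnto) with hTdef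
      have hsub : (Set.range fun v : R => A v (↑(W.orthogonalProjectionOnto ψ) : H)) ⊆
          T '' (Set.range fun v : R => A v ψ) := by
        rintro _ ⟨v, rfl⟩
        refine ⟨A v ψ, ⟨v, rfl⟩, ?_⟩
        show (↑(W.orthogonalProjectionOnto (A v ψ)) : H) = _
        exact hPA v ψ
      exact TotallyBounded.subset hsub ((htbA hψ).image T.uniformContinuous)
    -- pull the projection back through the isometry `M u`
    obtain ⟨χ, hχ⟩ := LinearMap.mem_range.1 (W.orthogonalProjectionOnto ψ).2
    have hχmu : M u χ = ↑(W.orthogonalProjectionOnto ψ) := hχ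
    -- the sub-orbit of χ over the ideal (u) is totally bounded
    set T0 : Set H := Set.range fun s : R => A (s * u) χ with hT0def
    have hMT0 : (M u) '' T0 ⊆
        Set.range fun v : R => A v (↑(W.orthogonalProjectionOnto ψ) : H) := by
      rintro _ ⟨_, ⟨s, rfl⟩, rfl⟩
      refine ⟨s, ?_⟩
      rw [← hχmu]
      exact hAM s u hu χ
    have hT0 : TotallyBounded T0 := by
      rw [← totallyBounded_image_iff (M u).isometry.isUniformInducing]
      exact TotallyBounded.subset hMT0 (htbA hPψ)
    -- the full orbit of χ is a finite union of isometric images of the sub-orbit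
    haveI : ((Ideal.span ({u} : Set R)).toAddSubgroup).FiniteIndex := hLID u hu
    set S : AddSubgroup R := (Ideal.span ({u} : Set R)).toAddSubgroup with hSdef
    haveI : Finite (R ⧸ S) := AddSubgroup.finite_quotient_of_finiteIndex
    have horb : (Set.range fun w : R => A w χ) ⊆
        ⋃ c : R ⧸ S, (A (Quotient.out c)) '' T0 := by
      rintro _ ⟨w, rfl⟩
      set c : R ⧸ S := QuotientAddGroup.mk w with hcdef
      have hout : (QuotientAddGroup.mk (Quotient.out c) : R ⧸ S)
          = QuotientAddGroup.mk w := by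
        rw [← hcdef]
        exact Quotient.out_eq c
      have hmem : -(Quotient.out c) + w ∈ S := (QuotientAddGroup.eq).1 hout
      obtain ⟨s, hs⟩ := Ideal.mem_span_singleton'.1 hmem
      have hw : w = Quotient.out c + s * u := by
        rw [hs, add_neg_cancel_left]
      refine Set.mem_iUnion.2 ⟨c, ⟨A (s * u) χ, ⟨s, rfl⟩, ?_⟩⟩
      rw [hAadd, ← hw]
    have hχc : addOrbitCompact A χ := by
      apply haddC
      refine TotallyBounded.subset horb (totallyBounded_iUnion.2 fun c => ?_)
      exact hT0.image (A (Quotient.out c)).isometry.uniformContinuous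
    -- finally compute the inner product
    have hdecomp : (inner ℂ (M u x) ψ : ℂ)
        = inner ℂ (M u x) (↑(W.orthogonalProjectionOnto ψ) : H)
          + inner ℂ (M u x) (ψ - ↑(W.orthogonalProjectionOnto ψ)) := by
      rw [← inner_add_right]
      congr 1
      abel
    have hperp : (inner ℂ (M u x) (ψ - ↑(W.orthogonalProjectionOnto ψ)) : ℂ) = 0 :=
      (Submodule.mem_orthogonal W _).1 (Submodule.sub_starProjection_mem_orthogonal (K := W) ψ)
        (M u x) (hWmem x)
    have hfirst : (inner ℂ (M u x) (↑(W.orthogonalProjectionOnto ψ) : H) : ℂ) = 0 := by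
      rw [← hχmu, (M u).inner_map_map]
      exact hx χ hχc
    rw [hdecomp, hperp, hfirst, add_zero]
  -- `VA` commutes with every `M u`, `u ≠ 0`
  have hVAM : ∀ (u : R), u ≠ 0 → ∀ x : H, VA (M u x) = M u (VA x) := by
    intro u hu x
    apply uniqA
    · exact hMKA u hu _ (hVAmem x)
    · intro ψ hψ
      have e : M u x - M u (VA x) = M u (x - VA x) := (map_sub (M u) _ _).symm
      rw [e]
      exact key6 u hu _ (fun ψ' hψ' => hVAorth x ψ' hψ') ψ hψ
  -- `VA` is self-adjoint
  have hVAsa : ∀ x y : H, (inner ℂ (VA x) y : ℂ) = inner ℂ x (VA y) := by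
    intro x y
    have h1 : (inner ℂ (VA x) (y - VA y) : ℂ) = 0 := by
      rw [← inner_conj_symm, hVAorth y (VA x) (hVAmem x), map_zero]
    have h2 : (inner ℂ (x - VA x) (VA y) : ℂ) = 0 := hVAorth x _ (hVAmem y)
    rw [inner_sub_right] at h1
    rw [inner_sub_left] at h2
    rw [sub_eq_zero.1 h1, sub_eq_zero.1 h2]
  -- `VA` preserves multiplicatively compact vectors
  have hVAKM : ∀ x : H, mulOrbitCompact M x → mulOrbitCompact M (VA x) := by
    intro x hx
    apply hmulC
    have hsub : (Set.range fun u : {u : R // u ≠ (0 : R)} => M u.1 (VA x)) ⊆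
        (VA : H → H) '' (Set.range fun u : {u : R // u ≠ (0 : R)} => M u.1 x) := by
      rintro _ ⟨u, rfl⟩
      exact ⟨M u.1 x, ⟨u, rfl⟩, hVAM u.1 u.2 x⟩
    exact TotallyBounded.subset hsub ((htbM hx).image VA.uniformContinuous)
  -- conclusion
  have h1 : mulOrbitCompact M (VA (VM φ)) := hVAKM _ (hVMmem φ)
  have h2 : ∀ ψ : H, mulOrbitCompact M ψ →
      (inner ℂ (VA φ - VA (VM φ)) ψ : ℂ) = 0 := by
    intro ψ hψ
    have e : VA φ - VA (VM φ) = VA (φ - VM φ) := (map_sub VA φ (VM φ)).symm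
    rw [e, hVAsa]
    exact hVMorth φ (VA ψ) (hVAKM ψ hψ)
  exact (uniqM (VA φ) (VA (VM φ)) h1 h2).symm
end

section
/- Let R be an infinite countable integral domain and let S ⊆ R∖{0} be multiplicatively syndetic, i.e. there is a finite set F ⊆ R∖{0} such that for every x ∈ R∖{0} there exists n ∈ F with n·x ∈ S. Then there exist nonzero elements x, y ∈ R with x + y ∈ S and x·y ∈ S. -/
open Finset in
/-- Greedy construction: a family whose `A`-linear combinations vanish only trivially. -/
lemma exists_indep_family {R : Type*} [CommRing R] [IsDomain R] [Infinite R] (A : Finset R) :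
    ∀ n : ℕ, ∃ E : Fin n → R, ∀ c : Fin n → R, (∀ i, c i ∈ A) →
      (∑ i, c i * E i) = 0 → ∀ i, c i = 0 := by
  intro n
  induction n with
  | zero => exact ⟨fun i => i.elim0, fun c _ _ i => i.elim0⟩
  | succ n ih =>
    classical
    obtain ⟨E, hE⟩ := ih
    set Sums : Set R := Set.range (fun c : Fin n → {a : R // a ∈ A} => ∑ i, (c i : R) * E i)
      with hSums_def
    have hSums : Sums.Finite := Set.finite_range _
    set Bad : Set R := ⋃ a ∈ (A : Set R), ⋃ s ∈ Sums, {x : R | a ≠ 0 ∧ a * x + s = 0}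
      with hBad_def
    have hBadFin : Bad.Finite := by
      refine (A : Set R).toFinite.biUnion fun a _ => hSums.biUnion fun s _ => ?_
      refine Set.Subsingleton.finite ?_
      rintro x ⟨ha, hx⟩ y ⟨-, hy⟩
      have : a * x = a * y := by linear_combination hx - hy
      exact mul_left_cancel₀ ha this
    obtain ⟨x, hx⟩ := hBadFin.infinite_compl.nonempty
    refine ⟨Fin.cons x E, ?_⟩
    intro c hc hsum
    rw [Fin.sum_univ_succ] at hsum
    simp only [Fin.cons_zero, Fin.cons_succ] at hsum
    have hsS : (∑ i : Fin n, c i.succ * E i) ∈ Sums :=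
      ⟨fun i => ⟨c i.succ, hc _⟩, rfl⟩
    have hc0 : c 0 = 0 := by
      by_contra h0
      apply hx
      simp only [hBad_def, Set.mem_iUnion, Set.mem_setOf_eq]
      exact ⟨c 0, hc 0, _, hsS, h0, hsum⟩
    have hs : (∑ i : Fin n, c i.succ * E i) = 0 := by
      rwa [hc0, zero_mul, zero_add] at hsum
    have htail := hE (fun i => c i.succ) (fun i => hc _) hs
    intro i
    refine Fin.cases hc0 (fun j => htail j) i

/-- Let `R` be an infinite countable integral domain and `S ⊆ R∖{0}`
multiplicatively syndetic (finitely many multiplicative shifts of `S` cover `R∖{0}`). Then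
`S` contains a pair `{x + y, x·y}` with `x, y` nonzero. -/
theorem stmt16 {R : Type*} [CommRing R] [IsDomain R] [Countable R] [Infinite R]
    (S : Set R) (hS0 : ∀ s ∈ S, s ≠ 0)
    (F : Finset R) (hF0 : ∀ n ∈ F, n ≠ 0)
    (hF : ∀ x : R, x ≠ 0 → ∃ n ∈ F, n * x ∈ S) :
    ∃ x y : R, x ≠ 0 ∧ y ≠ 0 ∧ x + y ∈ S ∧ x * y ∈ S := by
  classical
  obtain ⟨x₀, hx₀⟩ := exists_ne (0 : R)
  obtain ⟨n₀, hn₀, -⟩ := hF x₀ hx₀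
  -- a total "color" function
  let g : R → R := fun z => if h : z ≠ 0 then (hF z h).choose else n₀
  have hg : ∀ z : R, z ≠ 0 → g z ∈ F ∧ g z * z ∈ S := by
    intro z h
    have h1 := (hF z h).choose_spec
    simp only [g, dif_pos h]
    exact h1
  -- alphabet and colors
  let Ft : Finset R := insert 0 F
  let α : Type _ := {a : R // a ∈ Ft}
  let κ : Type _ := {n : R // n ∈ F}
  haveI : Fintype α := FinsetCoe.fintype Ft
  haveI : Fintype κ := FinsetCoe.fintype F
  obtain ⟨ι, _inst, hHJ⟩ := Combinatorics.Line.exists_mono_in_high_dimension α κ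
  set N := Fintype.card ι with hN
  let ε : ι ≃ Fin N := Fintype.equivFin ι
  obtain ⟨E, hE⟩ := exists_indep_family (insert (1 : R) Ft) (N + 1)
  let Ee : ι → R := fun i => E (Fin.castSucc (ε i))
  let Es : R := E (Fin.last N)
  let value : (ι → α) → R := fun w => Es + ∑ i, ((w i : R) * Ee i)
  -- bridge to independence
  have bridge : ∀ (b : R) (w : ι → R), b ∈ insert (1 : R) Ft →
      (∀ i, w i ∈ insert (1 : R) Ft) →
      b * Es + ∑ i, w i * Ee i = 0 → b = 0 ∧ ∀ i, w i = 0 := by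
    intro b w hb hw hsum
    set c : Fin (N + 1) → R := fun j => Fin.lastCases b (fun jj => w (ε.symm jj)) j with hc_def
    have hcoef : ∀ j, c j ∈ insert (1 : R) Ft := by
      intro j
      induction j using Fin.lastCases with
      | last => simpa [hc_def] using hb
      | cast jj => simpa [hc_def] using hw (ε.symm jj)
    have hcsum : (∑ j, c j * E j) = b * Es + ∑ i, w i * Ee i := by
      rw [Fin.sum_univ_castSucc]
      simp only [hc_def, Fin.lastCases_last, Fin.lastCases_castSucc]
      rw [add_comm]
      congr 1
      refine Fintype.sum_equiv ε.symm _ _ fun jj => ?_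
      simp [Ee]
    have hall := hE c hcoef (by rw [hcsum]; exact hsum)
    constructor
    · have := hall (Fin.last N)
      simpa [hc_def] using this
    · intro i
      have := hall (Fin.castSucc (ε i))
      simpa [hc_def] using this
  have hFtA : ∀ {a : R}, a ∈ Ft → a ∈ insert (1 : R) Ft := fun h => Finset.mem_insert_of_mem h
  have valNe : ∀ w : ι → α, value w ≠ 0 := by
    intro w h
    have hb := bridge 1 (fun i => (w i : R)) (Finset.mem_insert_self _ _)
      (fun i => hFtA (w i).2) (by rw [one_mul]; exact h)
    exact one_ne_zero hb.1
  -- the coloring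
  let C : (ι → α) → κ := fun w => ⟨g (value w), (hg _ (valNe w)).1⟩
  obtain ⟨l, m, hm⟩ := hHJ C
  have memS : ∀ x : α, (m : R) * value (l x) ∈ S := by
    intro x
    have h1 := (hg (value (l x)) (valNe _)).2
    have h2 : g (value (l x)) = (m : R) := congrArg Subtype.val (hm x)
    rwa [h2] at h1
  -- decompose the line
  let e₀ : R := ∑ i ∈ Finset.univ.filter (fun i => l.idxFun i = none), Ee i
  let zl : α := ⟨0, Finset.mem_insert_self 0 F⟩
  let u₀ : R := Es + ∑ i ∈ Finset.univ.filter (fun i => ¬ l.idxFun i = none),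
      ((l zl i : R) * Ee i)
  have hval : ∀ x : α, value (l x) = (x : R) * e₀ + u₀ := by
    intro x
    show Es + ∑ i, ((l x i : R) * Ee i) = (x : R) * e₀ + u₀
    rw [← Finset.sum_filter_add_sum_filter_not Finset.univ (fun i => l.idxFun i = none)
      (fun i => ((l x i : R) * Ee i))]
    have h1 : ∑ i ∈ Finset.univ.filter (fun i => l.idxFun i = none), ((l x i : R) * Ee i)
        = (x : R) * e₀ := by
      rw [Finset.mul_sum]
      refine Finset.sum_congr rfl fun i hi => ?_
      have hnone : l.idxFun i = none := (Finset.mem_filter.mp hi).2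
      have : l x i = x := by simp [Combinatorics.Line.coe_apply, hnone]
      rw [this]
    have h2 : ∑ i ∈ Finset.univ.filter (fun i => ¬ l.idxFun i = none), ((l x i : R) * Ee i)
        = ∑ i ∈ Finset.univ.filter (fun i => ¬ l.idxFun i = none), ((l zl i : R) * Ee i) := by
      refine Finset.sum_congr rfl fun i hi => ?_
      have hne : ¬ l.idxFun i = none := (Finset.mem_filter.mp hi).2
      obtain ⟨a, ha⟩ := Option.ne_none_iff_exists'.mp hne
      have hx : l x i = a := by simp [Combinatorics.Line.coe_apply, ha]
      have hz : l zl i = a := by simp [Combinatorics.Line.coe_apply, ha]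
      rw [hx, hz]
    rw [h1, h2]
    ring
  have he₀ : e₀ ≠ 0 := by
    intro h
    have hb := bridge 0 (fun i => if l.idxFun i = none then (1 : R) else 0)
      (hFtA (Finset.mem_insert_self 0 F))
      (fun i => by
        by_cases hi : l.idxFun i = none
        · simp only [hi, if_pos]
          exact Finset.mem_insert_self _ _
        · simp only [hi, if_neg, if_false]
          exact hFtA (Finset.mem_insert_self 0 F))
      (by
        have hsum : (∑ i, (if l.idxFun i = none then (1 : R) else 0) * Ee i) = e₀ := by
          simp only [ite_mul, one_mul, zero_mul]
          exact (Finset.sum_filter _ _).symm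
        rw [zero_mul, zero_add, hsum]
        exact h)
    obtain ⟨i0, hi0⟩ := l.proper
    have h1 := hb.2 i0
    simp only [hi0, if_true] at h1
    exact one_ne_zero h1
  -- conclude
  have hzl0 : ((zl : α) : R) = 0 := rfl
  have hu' : (m : R) * u₀ ∈ S := by
    have h1 := memS zl
    rw [hval zl, hzl0, zero_mul, zero_add] at h1
    exact h1
  have hmF : (m : R) ∈ F := m.2
  have he' : (m : R) * e₀ ≠ 0 := mul_ne_zero (hF0 _ hmF) he₀
  have hu'0 : (m : R) * u₀ ≠ 0 := hS0 _ hu'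
  have hz : ((m : R) * e₀) * ((m : R) * u₀) ≠ 0 := mul_ne_zero he' hu'0
  obtain ⟨q, hq, hqS⟩ := hF _ hz
  refine ⟨q * ((m : R) * e₀), (m : R) * u₀, mul_ne_zero (hF0 q hq) he', hu'0, ?_, ?_⟩
  · have h1 := memS ⟨q, Finset.mem_insert_of_mem hq⟩
    rw [hval ⟨q, Finset.mem_insert_of_mem hq⟩] at h1
    have : q * ((m : R) * e₀) + (m : R) * u₀
        = (m : R) * (((⟨q, Finset.mem_insert_of_mem hq⟩ : α) : R) * e₀ + u₀) := by
      push_cast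
      ring
    rw [this]
    exact h1
  · rw [mul_assoc]
    exact hqS
end

section
/- There exists a set E of positive integers such that: (i) E is additively thick, i.e. for every n ∈ ℕ there exists a ∈ ℕ with {a, a+1, …, a+n} ⊆ E; (ii) E is multiplicatively thick, i.e. for every finite set G of positive integers there exists a positive integer m with g·m ∈ E for all g ∈ G; and yet (iii) there is no pair of integers x, y with x > 2 and y > 2 such that both x + y ∈ E and x·y ∈ E. -/
noncomputable def Qp (t : ℕ) : ℕ := (Nat.exists_infinite_primes (t + 1)).choose

lemma Qp_gt (t : ℕ) : t < Qp t := (Nat.exists_infinite_primes (t + 1)).choose_spec.1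
lemma Qp_prime (t : ℕ) : (Qp t).Prime := (Nat.exists_infinite_primes (t + 1)).choose_spec.2

noncomputable def bb : ℕ → ℕ
  | 0 => 10
  | n + 1 => (n + 1) * Qp (((bb n) ^ 2 + 1 + (n + 1)) ^ 2)

noncomputable def aa (n : ℕ) : ℕ := (bb n) ^ 2 + 1
noncomputable def qq (n : ℕ) : ℕ := Qp ((aa n + (n + 1)) ^ 2)

lemma bb_succ (n : ℕ) : bb (n + 1) = (n + 1) * qq n := rfl
lemma qq_gt (n : ℕ) : (aa n + (n + 1)) ^ 2 < qq n := Qp_gt _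
lemma qq_prime (n : ℕ) : (qq n).Prime := Qp_prime _

lemma bb_ge (n : ℕ) : n + 10 ≤ bb n := by
  induction n with
  | zero => simp [bb]
  | succ n ih =>
    have h1 := qq_gt n
    have h2 : bb n ^ 2 + 1 + (n+1) ≤ (aa n + (n+1))^2 := by
      have := Nat.le_self_pow (two_ne_zero) (aa n + (n+1))
      simpa [aa] using this
    have h3 : qq n ≤ bb (n+1) := by
      rw [bb_succ]; exact Nat.le_mul_of_pos_left _ (Nat.succ_pos n)
    have hb2 : bb n ≤ bb n ^ 2 := Nat.le_self_pow two_ne_zero _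
    omega

lemma aa_gt (n : ℕ) : (bb n) ^ 2 < aa n := Nat.lt_succ_self _

lemma bb_sq_lt (n : ℕ) : (bb n) ^ 2 < bb (n + 1) := by
  have h1 := qq_gt n
  have h2 : aa n ≤ (aa n + (n+1))^2 := le_trans (Nat.le_add_right _ _) (Nat.le_self_pow two_ne_zero _)
  have h3 : qq n ≤ bb (n+1) := by
    rw [bb_succ]; exact Nat.le_mul_of_pos_left _ (Nat.succ_pos n)
  have := aa_gt n
  omega

lemma bb_lt (n : ℕ) : bb n < bb (n + 1) := by
  have := bb_sq_lt n
  have : bb n ≤ bb n ^ 2 := Nat.le_self_pow two_ne_zero _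
  omega

lemma bb_mono : Monotone bb := monotone_nat_of_le_succ fun n => (bb_lt n).le

/-- Piece predicate: `m` belongs to the `n`-th pair of blocks. -/
def Piece (n m : ℕ) : Prop :=
  (aa n ≤ m ∧ m ≤ aa n + (n + 1)) ∨ (∃ g, 0 < g ∧ g ≤ n + 1 ∧ m = g * qq n)

noncomputable def E17 : Set ℕ := { m | ∃ n, Piece n m }

lemma piece_bounds {n m : ℕ} (h : Piece n m) : (bb n) ^ 2 < m ∧ m ≤ bb (n + 1) := by
  have hq := qq_gt n
  have h3 : qq n ≤ bb (n+1) := by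
    rw [bb_succ]; exact Nat.le_mul_of_pos_left _ (Nat.succ_pos n)
  have h2 : aa n + (n+1) ≤ (aa n + (n+1))^2 := Nat.le_self_pow two_ne_zero _
  have ha := aa_gt n
  rcases h with ⟨h1, h2'⟩ | ⟨g, hg0, hg, rfl⟩
  · omega
  · constructor
    · have : qq n ≤ g * qq n := Nat.le_mul_of_pos_left _ hg0
      omega
    · rw [bb_succ]
      exact Nat.mul_le_mul_right _ hg

/-- There is a set `E` of positive integers that is additively thick and
multiplicatively thick, yet contains no pair `{x + y, x·y}` with `x > 2` and `y > 2`. -/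
theorem stmt17 :
    ∃ E : Set ℕ, (∀ n ∈ E, 0 < n) ∧
      (∀ n : ℕ, ∃ a : ℕ, 0 < a ∧ ∀ k ≤ n, a + k ∈ E) ∧
      (∀ G : Finset ℕ, (∀ g ∈ G, 0 < g) → ∃ m : ℕ, 0 < m ∧ ∀ g ∈ G, g * m ∈ E) ∧
      ¬∃ x y : ℕ, 2 < x ∧ 2 < y ∧ x + y ∈ E ∧ x * y ∈ E := by
  refine ⟨E17, ?_, ?_, ?_, ?_⟩
  · -- positivity
    rintro m ⟨n, h⟩
    exact lt_of_le_of_lt (Nat.zero_le _) (piece_bounds h).1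
  · -- additive thickness
    intro n
    refine ⟨aa n, Nat.succ_pos _, fun k hk => ⟨n, Or.inl ⟨Nat.le_add_right _ _, by omega⟩⟩⟩
  · -- multiplicative thickness
    intro G hG
    refine ⟨qq (G.sup id), (qq_prime _).pos, fun g hg => ?_⟩
    exact ⟨G.sup id, Or.inr ⟨g, hG g hg, le_trans (Finset.le_sup (f := id) hg) (Nat.le_succ _), rfl⟩⟩
  · -- no pair x+y, x*y
    rintro ⟨x, y, hx, hy, ⟨ns, hs⟩, ⟨np, hp⟩⟩
    have hsb := piece_bounds hs
    have hpb := piece_bounds hp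
    have h3x : 3 ≤ x := hx
    have h3y : 3 ≤ y := hy
    -- basic inequalities
    have hps : 3 * (x + y) ≤ x * y + 9 := by nlinarith [Nat.mul_le_mul h3x h3y]
    have hss : x * y < (x + y) ^ 2 := by nlinarith
    have hp9 : 9 ≤ x * y := Nat.mul_le_mul h3x h3y
    set s := x + y with hsdef
    set p := x * y with hpdef
    rcases lt_trichotomy ns np with hlt | heq | hgt
    · -- p > s^2, contradiction
      have h1 : bb (ns + 1) ≤ bb np := bb_mono hlt
      have h2 : s ≤ bb np := le_trans hsb.2 h1
      have : s ^ 2 ≤ bb np ^ 2 := Nat.pow_le_pow_left h2 2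
      omega
    · -- same block pair
      subst heq
      have hq := qq_gt ns
      have hban := bb_ge ns
      have haan : (ns + 10)^2 < aa ns := lt_of_le_of_lt (Nat.pow_le_pow_left hban 2) (aa_gt ns)
      rcases hp with ⟨hp1, hp2⟩ | ⟨g, hg0, hg, hpeq⟩
      · -- p in interval block
        rcases hs with ⟨hs1, hs2⟩ | ⟨g', hg0', hg', hseq⟩
        · -- both in interval: 3s ≤ p + 9 but p ≤ aa+n+1 < 3 aa - 9
          nlinarith
        · -- s in mult block: s ≥ qq > (aa+n+1)^2 ≥ p, but 3s ≤ p+9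
          have h1 : qq ns ≤ s := by rw [hseq]; exact Nat.le_mul_of_pos_left _ hg0'
          have h2 : aa ns + (ns+1) ≤ (aa ns + (ns+1))^2 := Nat.le_self_pow two_ne_zero _
          omega
      · -- p in mult block
        rcases hs with ⟨hs1, hs2⟩ | ⟨g', hg0', hg', hseq⟩
        · -- s in interval: p ≥ qq > (aa+n+1)^2 ≥ s^2, but p < s^2
          have h1 : qq ns ≤ p := by rw [hpeq]; exact Nat.le_mul_of_pos_left _ hg0
          have h2 : s ^ 2 ≤ (aa ns + (ns+1))^2 := Nat.pow_le_pow_left hs2 2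
          omega
        · -- both in mult block: divisibility argument
          set q := qq ns with hqdef
          have hqp : q.Prime := qq_prime ns
          have hqn : ns + 1 < q := by
            have : ns + 1 ≤ aa ns + (ns + 1) := Nat.le_add_left _ _
            have h2 : aa ns + (ns+1) ≤ (aa ns + (ns+1))^2 := Nat.le_self_pow two_ne_zero _
            omega
          -- in ℤ: x^2 = q*(x*g' - g), so q ∣ x
          have hqz : Prime (q : ℤ) := Nat.prime_iff_prime_int.mp hqp
          have hsz : (x : ℤ) + y = g' * q := by exact_mod_cast congrArg (Nat.cast : ℕ → ℤ) hseq
          have hpz : (x : ℤ) * y = g * q := by exact_mod_cast congrArg (Nat.cast : ℕ → ℤ) hpeq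
          have hdx : (q : ℤ) ∣ (x : ℤ) ^ 2 := ⟨x * g' - g, by linear_combination (x : ℤ) * hsz - hpz⟩
          have hdx' : (q : ℤ) ∣ (x : ℤ) := hqz.dvd_of_dvd_pow hdx
          obtain ⟨x', hx'⟩ := hdx'
          have hy : (y : ℤ) = g' * q - q * x' := by linarith [hsz, hx']
          have hq0 : (q : ℤ) ≠ 0 := by exact_mod_cast hqp.pos.ne'
          have hgq : (g : ℤ) * q = (q * (x' * g' - x' ^ 2)) * q := by
            rw [← hpz, hx', hy]; ring
          have hkey : (g : ℤ) = q * (x' * g' - x' ^ 2) := mul_right_cancel₀ hq0 hgq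
          have hdg : (q : ℤ) ∣ (g : ℤ) := ⟨x' * g' - x' ^ 2, hkey⟩
          have hdgn : q ∣ g := Int.natCast_dvd_natCast.mp hdg
          have := Nat.le_of_dvd hg0 hdgn
          omega
    · -- s > p^2, contradiction
      have h1 : bb (np + 1) ≤ bb ns := bb_mono hgt
      have h2 : p ≤ bb ns := le_trans hpb.2 h1
      have : p ^ 2 ≤ bb ns ^ 2 := Nat.pow_le_pow_left h2 2
      nlinarith [hsb.1]
end

section
/- Let p be a nonprincipal ultrafilter on ℤ satisfying p·p = p. Then the set of positive integers {n ∈ ℤ : n > 0} belongs to p. -/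
open Filter

/-- Every nonprincipal multiplicative idempotent ultrafilter on `ℤ` contains
the set of positive integers. -/
theorem stmt19 (p : Ultrafilter ℤ) (hnp : ∀ u : ℤ, p ≠ pure u) (hid : umul p p = p) :
    {n : ℤ | 0 < n} ∈ p := by
  by_contra hpos
  have hz : {(0 : ℤ)} ∉ p := fun h => by
    obtain ⟨x, _, hfx⟩ := Ultrafilter.eq_pure_of_finite_mem (Set.finite_singleton 0) h
    exact hnp x hfx
  have hneg : {n : ℤ | n < 0} ∈ p := by
    have hc : {n : ℤ | 0 < n}ᶜ ∈ p := Ultrafilter.compl_mem_iff_notMem.2 hpos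
    have he : {n : ℤ | 0 < n}ᶜ = {n : ℤ | n < 0} ∪ {0} := by
      ext n
      simp only [Set.mem_compl_iff, Set.mem_setOf_eq, not_lt, Set.mem_union,
        Set.mem_singleton_iff]
      omega
    rw [he] at hc
    rcases Ultrafilter.union_mem_iff.1 hc with h | h
    · exact h
    · exact absurd h hz
  have key2 : {m : ℤ | {n : ℤ | m * n < 0} ∈ p} ∈ p := by
    have : {n : ℤ | n < 0} ∈ (p.bind fun u => p.map fun v => u * v) := by
      show {n : ℤ | n < 0} ∈ umul p p
      rw [hid]; exact hneg
    obtain ⟨t, ht, hts⟩ := Filter.mem_bind.1 this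
    exact Filter.mem_of_superset ht fun m hm => hts m hm
  obtain ⟨m, hm⟩ := Ultrafilter.nonempty_of_mem (p.inter_mem key2 hneg)
  apply hpos
  refine Filter.mem_of_superset hm.1 fun n hn => ?_
  have hm2 : m < 0 := hm.2
  simp only [Set.mem_setOf_eq] at hn ⊢
  nlinarith
end
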